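/- arXiv:1702.04559 — 5 statements merged into one kernel-verified Lean document; each statement's English description precedes it below -/
import Mathlib

section
/- Let q be any prime power. Then the covering radius of PGL₂(q), viewed as a set of permutations of the projective line Ω = F_q ∪ {∞} via its action by fractional linear transformations, equals q − 2 if q is even and equals q − 3 if q is odd. -/
open scoped OnePoint

open scoped Classical in
/-- The fractional linear transformation `x ↦ (a*x+b)/(c*x+d)` on the projective line
`Ω = F ∪ {∞}`, with the usual conventions at `∞` and at the pole. -/
noncomputable def moebius {F : Type*} [Field F] (a b c d : F) : OnePoint F → OnePoint F :=
  fun x => Option.elim x (if c = 0 then ∞ else ((a / c : F) : OnePoint F))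
    (fun t => if c * t + d = 0 then ∞ else (((a * t + b) / (c * t + d) : F) : OnePoint F))

/-- `PGL₂(F)` regarded as the set of permutations of the projective line `Ω = F ∪ {∞}`
induced by fractional linear transformations. -/
def PGLset (F : Type*) [Field F] : Set (Equiv.Perm (OnePoint F)) :=
  { v | ∃ a b c d : F, a * d - b * c ≠ 0 ∧ ∀ x, v x = moebius a b c d x }

/-- The Hamming distance `d(g,h) = |Ω| - |fix (g * h⁻¹)|` on the symmetric group. -/
noncomputable def permDist {Ω : Type*} [Fintype Ω] (g h : Equiv.Perm Ω) : ℕ :=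
  Fintype.card Ω - (Function.fixedPoints ⇑(g * h⁻¹)).ncard

/-- The covering radius of a set `C` of permutations:
`Cr(C) = max over v of min over c ∈ C of d(v,c)`. -/
noncomputable def coveringRadius {Ω : Type*} [Fintype Ω] (C : Set (Equiv.Perm Ω)) : ℕ :=
  sSup { n | ∃ v : Equiv.Perm Ω, n = sInf { m | ∃ c ∈ C, m = permDist v c } }

open scoped Classical

namespace CRPGL

variable {F : Type*} [Field F]

lemma moebius_infty (a b c d : F) :
    moebius a b c d ∞ = if c = 0 then ∞ else ((a/c : F) : OnePoint F) := rfl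

lemma moebius_coe (a b c d t : F) :
    moebius a b c d (t : OnePoint F)
      = if c*t+d = 0 then ∞ else (((a*t+b)/(c*t+d) : F) : OnePoint F) := rfl


lemma moebius_comp (a b c d a' b' c' d' : F)
    (h' : a'*d' - b'*c' ≠ 0) (x : OnePoint F) :
    moebius a b c d (moebius a' b' c' d' x)
      = moebius (a*a'+b*c') (a*b'+b*d') (c*a'+d*c') (c*b'+d*d') x := by
  induction x using OnePoint.rec with
  | infty =>
    rw [moebius_infty]
    by_cases hc' : c' = 0
    · have ha' : a' ≠ 0 := by intro h0; apply h'; rw [hc', h0]; ring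
      rw [if_pos hc', moebius_infty, moebius_infty]
      by_cases hc : c = 0
      · rw [if_pos hc, if_pos (by rw [hc, hc']; ring)]
      · rw [if_neg hc, if_neg (show c*a'+d*c' ≠ 0 by rw [hc']; simpa using mul_ne_zero hc ha')]
        rw [OnePoint.coe_eq_coe]
        rw [hc']
        field_simp
        ring
    · rw [if_neg hc', moebius_coe, moebius_infty]
      by_cases hcc : c*(a'/c') + d = 0
      · rw [if_pos hcc, if_pos (by field_simp at hcc; linear_combination hcc)]
      · have : c*a'+d*c' ≠ 0 := by
          intro h0; apply hcc; field_simp; linear_combination h0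
        rw [if_neg hcc, if_neg this, OnePoint.coe_eq_coe]
        field_simp
  | coe t =>
    rw [moebius_coe]
    by_cases hd' : c'*t+d' = 0
    · have key : (c*a'+d*c')*t + (c*b'+d*d') = c*(a'*t+b') := by linear_combination d * hd'
      have hnum : a'*t+b' ≠ 0 := by
        intro h0
        apply h'
        by_cases ht : t = 0
        · rw [ht] at hd' h0
          simp at hd' h0
          rw [hd', h0]; ring
        · have hz : t*(a'*d'-b'*c') = 0 := by linear_combination (a'*t)*hd' - (c'*t)*h0
          exact (mul_eq_zero.mp hz).resolve_left ht
      rw [if_pos hd', moebius_infty, moebius_coe]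
      by_cases hc : c = 0
      · rw [if_pos hc, if_pos (by rw [key, hc]; ring)]
      · rw [if_neg hc, if_neg (by rw [key]; exact mul_ne_zero hc hnum), OnePoint.coe_eq_coe]
        have keyn : (a*a'+b*c')*t + (a*b'+b*d') = a*(a'*t+b') := by linear_combination b * hd'
        rw [key, keyn, mul_div_mul_right _ _ hnum]
    · rw [if_neg hd', moebius_coe, moebius_coe]
      have denom_eq : c*((a'*t+b')/(c'*t+d')) + d
          = ((c*a'+d*c')*t + (c*b'+d*d'))/(c'*t+d') := by rw [mul_div_assoc', div_add' _ _ _ hd']; ring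
      have num_eq : a*((a'*t+b')/(c'*t+d')) + b
          = ((a*a'+b*c')*t + (a*b'+b*d'))/(c'*t+d') := by rw [mul_div_assoc', div_add' _ _ _ hd']; ring
      by_cases hC : (c*a'+d*c')*t + (c*b'+d*d') = 0
      · rw [if_pos (by rw [denom_eq, hC, zero_div]), if_pos hC]
      · rw [if_neg (by rw [denom_eq]; exact div_ne_zero hC hd'), if_neg hC,
          OnePoint.coe_eq_coe, num_eq, denom_eq, div_div_div_cancel_right₀]
        exact hd'

lemma moebius_id (k : F) (hk : k ≠ 0) (x : OnePoint F) : moebius k 0 0 k x = x := by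
  induction x using OnePoint.rec with
  | infty => rw [moebius_infty, if_pos rfl]
  | coe t =>
    rw [moebius_coe, if_neg (by simpa using hk), OnePoint.coe_eq_coe]
    simp [hk]

/-- The Möbius permutation attached to an invertible matrix. -/
noncomputable def mkPGL (a b c d : F) (h : a*d - b*c ≠ 0) : Equiv.Perm (OnePoint F) where
  toFun := moebius a b c d
  invFun := moebius d (-b) (-c) a
  left_inv := by
    intro x
    have h' : d*a - (-b)*(-c) ≠ 0 := by ring_nf; ring_nf at h; rwa [mul_comm] at h
    rw [moebius_comp _ _ _ _ _ _ _ _ h x]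
    have e1 : d*a + (-b)*c = a*d-b*c := by ring
    have e2 : d*b + (-b)*d = 0 := by ring
    have e3 : (-c)*a + a*c = 0 := by ring
    have e4 : (-c)*b + a*d = a*d-b*c := by ring
    rw [e1, e2, e3, e4]
    exact moebius_id _ h x
  right_inv := by
    intro x
    have h' : d*a - (-b)*(-c) ≠ 0 := by ring_nf; ring_nf at h; rwa [mul_comm] at h
    rw [moebius_comp _ _ _ _ _ _ _ _ h' x]
    have e1 : a*d + b*(-c) = a*d-b*c := by ring
    have e2 : a*(-b) + b*a = 0 := by ring
    have e3 : c*d + d*(-c) = 0 := by ring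
    have e4 : c*(-b) + d*a = a*d-b*c := by ring
    rw [e1, e2, e3, e4]
    exact moebius_id _ h x

lemma mkPGL_mem (a b c d : F) (h : a*d - b*c ≠ 0) : mkPGL a b c d h ∈ PGLset F :=
  ⟨a, b, c, d, h, fun _ => rfl⟩

lemma eq_mkPGL {v : Equiv.Perm (OnePoint F)} {a b c d : F} (h : a*d - b*c ≠ 0)
    (hv : ∀ x, v x = moebius a b c d x) : v = mkPGL a b c d h :=
  Equiv.ext hv

lemma one_mem_PGLset : (1 : Equiv.Perm (OnePoint F)) ∈ PGLset F := by
  refine ⟨1, 0, 0, 1, by norm_num, fun x => ?_⟩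
  rw [moebius_id 1 one_ne_zero x]; rfl

lemma inv_mem_PGLset {v : Equiv.Perm (OnePoint F)} (hv : v ∈ PGLset F) : v⁻¹ ∈ PGLset F := by
  obtain ⟨a, b, c, d, h, hv⟩ := hv
  have h' : d*a - (-b)*(-c) ≠ 0 := by ring_nf; ring_nf at h; rwa [mul_comm] at h
  refine ⟨d, -b, -c, a, h', fun x => ?_⟩
  have : v = mkPGL a b c d h := eq_mkPGL h hv
  rw [this]
  rfl

lemma mul_mem_PGLset {v w : Equiv.Perm (OnePoint F)} (hv : v ∈ PGLset F) (hw : w ∈ PGLset F) :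
    v * w ∈ PGLset F := by
  obtain ⟨a, b, c, d, h, hv⟩ := hv
  obtain ⟨a', b', c', d', h', hw⟩ := hw
  refine ⟨a*a'+b*c', a*b'+b*d', c*a'+d*c', c*b'+d*d', ?_, fun x => ?_⟩
  · have : (a*a'+b*c')*(c*b'+d*d') - (a*b'+b*d')*(c*a'+d*c') = (a*d-b*c)*(a'*d'-b'*c') := by
      ring
    rw [this]
    exact mul_ne_zero h h'
  · show v (w x) = _
    rw [hw x, hv _, moebius_comp _ _ _ _ _ _ _ _ h' x]


lemma permDist_eq {Ω : Type*} [Fintype Ω] (v g : Equiv.Perm Ω) :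
    permDist v g = Fintype.card Ω - {x | v x = g x}.ncard := by
  have hfix : Function.fixedPoints ⇑(v * g⁻¹) = g '' {x | v x = g x} := by
    ext y
    simp only [Function.fixedPoints, Function.IsFixedPt, Equiv.Perm.mul_apply,
      Set.mem_setOf_eq, Set.mem_image]
    constructor
    · intro hy
      exact ⟨g⁻¹ y, by simpa [Equiv.Perm.coe_inv] using hy, g.apply_symm_apply y⟩
    · rintro ⟨x, hx, rfl⟩
      simp [hx]
  rw [permDist, hfix, Set.ncard_image_of_injective _ g.injective]

lemma permDist_le_of_agree {Ω : Type*} [Fintype Ω] (v g : Equiv.Perm Ω) (m : ℕ)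
    (hm : m ≤ {x | v x = g x}.ncard) : permDist v g ≤ Fintype.card Ω - m := by
  rw [permDist_eq]; exact Nat.sub_le_sub_left hm _

lemma le_permDist_of_agree {Ω : Type*} [Fintype Ω] (v g : Equiv.Perm Ω) (m : ℕ)
    (hm : {x | v x = g x}.ncard ≤ m) : Fintype.card Ω - m ≤ permDist v g := by
  rw [permDist_eq]; exact Nat.sub_le_sub_left hm _

lemma exists_to_std (x₁ x₂ x₃ : OnePoint F) (h12 : x₁ ≠ x₂) (h13 : x₁ ≠ x₃) (h23 : x₂ ≠ x₃) :
    ∃ v ∈ PGLset F, v x₁ = ∞ ∧ v x₂ = ((0:F) : OnePoint F) ∧ v x₃ = ((1:F) : OnePoint F) := by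
  induction x₁ using OnePoint.rec with
  | infty =>
    induction x₂ using OnePoint.rec with
    | infty => exact absurd rfl h12
    | coe p =>
      induction x₃ using OnePoint.rec with
      | infty => exact absurd rfl h13
      | coe r =>
        have hpr : r - p ≠ 0 := sub_ne_zero.mpr fun e => h23 (by rw [e])
        have hdet : (1:F)*(r-p) - (-p)*0 ≠ 0 := by simpa using hpr
        refine ⟨mkPGL 1 (-p) 0 (r-p) hdet, mkPGL_mem _ _ _ _ _, ?_, ?_, ?_⟩
        · show moebius 1 (-p) 0 (r-p) ∞ = ∞
          rw [moebius_infty, if_pos rfl]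
        · show moebius 1 (-p) 0 (r-p) (p : OnePoint F) = _
          rw [moebius_coe, if_neg (by simpa using hpr), OnePoint.coe_eq_coe]
          simp
        · show moebius 1 (-p) 0 (r-p) (r : OnePoint F) = _
          rw [moebius_coe, if_neg (by simpa using hpr), OnePoint.coe_eq_coe]
          rw [div_eq_one_iff_eq (by simpa using hpr)]
          ring
  | coe t₁ =>
    induction x₂ using OnePoint.rec with
    | infty =>
      induction x₃ using OnePoint.rec with
      | infty => exact absurd rfl h23
      | coe r =>
        have hrt : r - t₁ ≠ 0 :=
          sub_ne_zero.mpr fun e => h13 (by rw [e])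
        have hdet : (0:F)*(-t₁) - (r-t₁)*1 ≠ 0 := by
          rw [show (0:F)*(-t₁) - (r-t₁)*1 = -(r-t₁) by ring]
          exact neg_ne_zero.mpr hrt
        refine ⟨mkPGL 0 (r-t₁) 1 (-t₁) hdet, mkPGL_mem _ _ _ _ _, ?_, ?_, ?_⟩
        · show moebius 0 (r-t₁) 1 (-t₁) (t₁ : OnePoint F) = ∞
          rw [moebius_coe, if_pos (by ring)]
        · show moebius 0 (r-t₁) 1 (-t₁) ∞ = _
          rw [moebius_infty, if_neg one_ne_zero, OnePoint.coe_eq_coe]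
          norm_num
        · show moebius 0 (r-t₁) 1 (-t₁) (r : OnePoint F) = _
          have h1r : (1:F)*r + -t₁ ≠ 0 := by
            rw [show (1:F)*r + -t₁ = r - t₁ by ring]; exact hrt
          rw [moebius_coe, if_neg h1r, OnePoint.coe_eq_coe, div_eq_one_iff_eq h1r]
          ring
    | coe t₂ =>
      have h12' : t₁ ≠ t₂ := fun e => h12 (by rw [e])
      induction x₃ using OnePoint.rec with
      | infty =>
        have hdet : (1:F)*(-t₁) - (-t₂)*1 ≠ 0 := by
          rw [show (1:F)*(-t₁) - (-t₂)*1 = t₂ - t₁ by ring]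
          exact sub_ne_zero.mpr h12'.symm
        refine ⟨mkPGL 1 (-t₂) 1 (-t₁) hdet, mkPGL_mem _ _ _ _ _, ?_, ?_, ?_⟩
        · show moebius 1 (-t₂) 1 (-t₁) (t₁ : OnePoint F) = ∞
          rw [moebius_coe, if_pos (by ring)]
        · show moebius 1 (-t₂) 1 (-t₁) (t₂ : OnePoint F) = _
          have : (1:F)*t₂ + (-t₁) ≠ 0 := by
            rw [show (1:F)*t₂ + (-t₁) = t₂ - t₁ by ring]
            exact sub_ne_zero.mpr h12'.symm
          rw [moebius_coe, if_neg this, OnePoint.coe_eq_coe]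
          simp
        · show moebius 1 (-t₂) 1 (-t₁) ∞ = _
          rw [moebius_infty, if_neg one_ne_zero, OnePoint.coe_eq_coe]
          norm_num
      | coe t₃ =>
        have h13' : t₁ ≠ t₃ := fun e => h13 (by rw [e])
        have h23' : t₂ ≠ t₃ := fun e => h23 (by rw [e])
        have h31 : t₃ - t₁ ≠ 0 := sub_ne_zero.mpr h13'.symm
        have h32 : t₃ - t₂ ≠ 0 := sub_ne_zero.mpr h23'.symm
        have h21 : t₂ - t₁ ≠ 0 := sub_ne_zero.mpr h12'.symm
        have hdet : (t₃-t₁)*(-t₁*(t₃-t₂)) - (-t₂*(t₃-t₁))*(t₃-t₂) ≠ 0 := by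
          have : (t₃-t₁)*(-t₁*(t₃-t₂)) - (-t₂*(t₃-t₁))*(t₃-t₂)
              = (t₃-t₁)*(t₃-t₂)*(t₂-t₁) := by ring
          rw [this]
          exact mul_ne_zero (mul_ne_zero h31 h32) h21
        refine ⟨mkPGL (t₃-t₁) (-t₂*(t₃-t₁)) (t₃-t₂) (-t₁*(t₃-t₂)) hdet,
          mkPGL_mem _ _ _ _ _, ?_, ?_, ?_⟩
        · show moebius _ _ _ _ (t₁ : OnePoint F) = ∞
          rw [moebius_coe, if_pos (by ring)]
        · show moebius _ _ _ _ (t₂ : OnePoint F) = _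
          have hne : (t₃-t₂)*t₂ + (-t₁*(t₃-t₂)) ≠ 0 := by
            have : (t₃-t₂)*t₂ + (-t₁*(t₃-t₂)) = (t₃-t₂)*(t₂-t₁) := by ring
            rw [this]; exact mul_ne_zero h32 h21
          rw [moebius_coe, if_neg hne, OnePoint.coe_eq_coe]
          have : (t₃-t₁)*t₂ + (-t₂*(t₃-t₁)) = 0 := by ring
          rw [this, zero_div]
        · show moebius _ _ _ _ (t₃ : OnePoint F) = _
          have hne : (t₃-t₂)*t₃ + (-t₁*(t₃-t₂)) ≠ 0 := by
            have : (t₃-t₂)*t₃ + (-t₁*(t₃-t₂)) = (t₃-t₂)*(t₃-t₁) := by ring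
            rw [this]; exact mul_ne_zero h32 h31
          rw [moebius_coe, if_neg hne, OnePoint.coe_eq_coe]
          rw [div_eq_one_iff_eq hne]
          ring

lemma exists_pgl_triple (x₁ x₂ x₃ y₁ y₂ y₃ : OnePoint F)
    (h12 : x₁ ≠ x₂) (h13 : x₁ ≠ x₃) (h23 : x₂ ≠ x₃)
    (g12 : y₁ ≠ y₂) (g13 : y₁ ≠ y₃) (g23 : y₂ ≠ y₃) :
    ∃ v ∈ PGLset F, v x₁ = y₁ ∧ v x₂ = y₂ ∧ v x₃ = y₃ := by
  obtain ⟨g, hg, hg1, hg2, hg3⟩ := exists_to_std x₁ x₂ x₃ h12 h13 h23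
  obtain ⟨h, hh, hh1, hh2, hh3⟩ := exists_to_std y₁ y₂ y₃ g12 g13 g23
  refine ⟨h⁻¹ * g, mul_mem_PGLset (inv_mem_PGLset hh) hg, ?_, ?_, ?_⟩
  · show h⁻¹ (g x₁) = y₁
    rw [hg1, ← hh1, Equiv.Perm.coe_inv, Equiv.symm_apply_apply]
  · show h⁻¹ (g x₂) = y₂
    rw [hg2, ← hh2, Equiv.Perm.coe_inv, Equiv.symm_apply_apply]
  · show h⁻¹ (g x₃) = y₃
    rw [hg3, ← hh3, Equiv.Perm.coe_inv, Equiv.symm_apply_apply]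


section Counting
variable [Fintype F]

lemma card_onePoint : Fintype.card (OnePoint F) = Fintype.card F + 1 := Fintype.card_option

lemma ncard_roots_le (P : Polynomial F) (hP : P ≠ 0) :
    {t : F | Polynomial.eval t P = 0}.ncard ≤ P.natDegree := by
  have hset : {t : F | Polynomial.eval t P = 0} = ↑(P.roots.toFinset) := by
    ext t
    simp [Polynomial.mem_roots', hP, Polynomial.IsRoot]
  rw [hset, Set.ncard_coe_finset]
  exact le_trans (Multiset.toFinset_card_le _) (Polynomial.card_roots' P)

lemma agree_ncard_le (v g : OnePoint F → OnePoint F)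
    (P : Polynomial F) (hP : P ≠ 0)
    (hroot : ∀ t : F, v (t:OnePoint F) = g (t:OnePoint F) → Polynomial.eval t P = 0) :
    {x : OnePoint F | v x = g x}.ncard ≤ P.natDegree + 1 := by
  have hsub : {x : OnePoint F | v x = g x}
      ⊆ insert ∞ ((fun t : F => (t : OnePoint F)) '' {t : F | Polynomial.eval t P = 0}) := by
    intro x hx
    induction x using OnePoint.rec with
    | infty => exact Set.mem_insert _ _
    | coe t => exact Set.mem_insert_of_mem _ ⟨t, hroot t hx, rfl⟩
  refine le_trans (Set.ncard_le_ncard hsub (Set.toFinite _)) ?_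
  refine le_trans (Set.ncard_insert_le _ _) ?_
  rw [Set.ncard_image_of_injective _ OnePoint.coe_injective]
  exact Nat.add_le_add_right (ncard_roots_le P hP) 1

lemma agree_ncard_le_of_ne_infty (v g : OnePoint F → OnePoint F)
    (P : Polynomial F) (hP : P ≠ 0) (hinf : v ∞ ≠ g ∞)
    (hroot : ∀ t : F, v (t:OnePoint F) = g (t:OnePoint F) → Polynomial.eval t P = 0) :
    {x : OnePoint F | v x = g x}.ncard ≤ P.natDegree := by
  have hsub : {x : OnePoint F | v x = g x}
      ⊆ (fun t : F => (t : OnePoint F)) '' {t : F | Polynomial.eval t P = 0} := by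
    intro x hx
    induction x using OnePoint.rec with
    | infty => exact absurd hx hinf
    | coe t => exact ⟨t, hroot t hx, rfl⟩
  refine le_trans (Set.ncard_le_ncard hsub (Set.toFinite _)) ?_
  rw [Set.ncard_image_of_injective _ OnePoint.coe_injective]
  exact ncard_roots_le P hP

lemma prod_nonzero_eq_neg_one : ∏ w ∈ Finset.univ.erase (0:F), w = -1 := by
  have h := FiniteField.prod_univ_units_id_eq_neg_one (K := F)
  have h2 : ((∏ u : Fˣ, u : Fˣ) : F) = ∏ u : Fˣ, (u : F) := by
    exact map_prod (Units.coeHom F) _ _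
  have h3 : ∏ u : Fˣ, (u : F) = ∏ w ∈ Finset.univ.erase (0:F), w := by
    refine Finset.prod_bij (fun u _ => (u : F)) ?_ ?_ ?_ ?_
    · intro u _
      exact Finset.mem_erase.mpr ⟨u.ne_zero, Finset.mem_univ _⟩
    · intro u _ u' _ he
      exact Units.ext he
    · intro w hw
      exact ⟨Units.mk0 w (Finset.mem_erase.mp hw).1, Finset.mem_univ _, rfl⟩
    · intro u _
      rfl
  rw [← h3, ← h2, h, Units.val_neg, Units.val_one]

end Counting


section OddCore
variable [Fintype F]

lemma exists_pgl_pair (y₁ y₂ : OnePoint F) (h : y₁ ≠ y₂) :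
    ∃ h ∈ PGLset F, h ∞ = y₁ ∧ h ((0:F) : OnePoint F) = y₂ := by
  have hcard : 2 < Fintype.card (OnePoint F) := by
    rw [card_onePoint]
    have := Fintype.one_lt_card (α := F)
    omega
  obtain ⟨y₃, hy₃⟩ : ∃ y₃ : OnePoint F, y₃ ∉ ({y₁, y₂} : Finset (OnePoint F)) := by
    by_contra hc
    push_neg at hc
    have : (Finset.univ : Finset (OnePoint F)) ⊆ {y₁, y₂} := fun z _ => hc z
    have := Finset.card_le_card this
    simp only [Finset.card_univ] at this
    have h2 : ({y₁, y₂} : Finset (OnePoint F)).card ≤ 2 := Finset.card_insert_le _ _ |>.trans (by simp)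
    omega
  simp only [Finset.mem_insert, Finset.mem_singleton, not_or] at hy₃
  obtain ⟨g, hg, h1, h2, _⟩ := exists_pgl_triple ∞ ((0:F) : OnePoint F) ((1:F) : OnePoint F)
    y₁ y₂ y₃ (by simp) (by simp) (by simp [OnePoint.coe_eq_coe])
    h (Ne.symm hy₃.1) (Ne.symm hy₃.2)
  exact ⟨g, hg, h1, h2⟩

lemma exists_agree4 (hchar : ringChar F ≠ 2) (v : Equiv.Perm (OnePoint F)) :
    ∃ g ∈ PGLset F, 4 ≤ {x : OnePoint F | v x = g x}.ncard := by
  by_contra hc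
  push_neg at hc
  have H : ∀ g ∈ PGLset F, {x : OnePoint F | v x = g x}.ncard ≤ 3 := by
    intro g hg
    have := hc g hg
    omega
  -- normalize
  obtain ⟨h, hh, hinf, hzero⟩ := exists_pgl_pair (v ∞) (v ((0:F) : OnePoint F))
    (fun e => by simpa using v.injective e)
  set u : Equiv.Perm (OnePoint F) := h⁻¹ * v with hu
  have hu_inf : u ∞ = ∞ := by
    show h⁻¹ (v ∞) = ∞
    rw [← hinf, Equiv.Perm.coe_inv, Equiv.symm_apply_apply]
  have hu_zero : u ((0:F) : OnePoint F) = ((0:F) : OnePoint F) := by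
    show h⁻¹ (v ((0:F):OnePoint F)) = _
    rw [← hzero, Equiv.Perm.coe_inv, Equiv.symm_apply_apply]
  -- the key subsingleton property
  have key : ∀ a : F, a ≠ 0 → ∀ w₁ w₂ : F, w₁ ≠ 0 → w₂ ≠ 0 →
      u (w₁ : OnePoint F) = ((a*w₁ : F) : OnePoint F) →
      u (w₂ : OnePoint F) = ((a*w₂ : F) : OnePoint F) → w₁ = w₂ := by
    intro a ha w₁ w₂ hw₁ hw₂ he₁ he₂
    by_contra hne
    have hdet : a*1 - 0*0 ≠ 0 := by simpa using ha
    set g : Equiv.Perm (OnePoint F) := h * mkPGL a 0 0 1 hdet with hgdef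
    have hgm : g ∈ PGLset F := mul_mem_PGLset hh (mkPGL_mem _ _ _ _ _)
    have hsub : ({∞, ((0:F) : OnePoint F), (w₁ : OnePoint F), (w₂ : OnePoint F)} : Set (OnePoint F))
        ⊆ {x : OnePoint F | v x = g x} := by
      have gapp : ∀ x, g x = h (moebius a 0 0 1 x) := fun x => rfl
      intro x hx
      simp only [Set.mem_insert_iff, Set.mem_singleton_iff] at hx
      rcases hx with rfl | rfl | rfl | rfl
      · show v ∞ = g ∞
        rw [gapp, moebius_infty, if_pos rfl, hinf]
      · show v _ = g _
        rw [gapp, moebius_coe, if_neg (by norm_num),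
          show (a*0+0)/(0*0+1) = (0:F) by norm_num, hzero]
      · show v _ = g _
        have : v (w₁ : OnePoint F) = h (u (w₁ : OnePoint F)) := by
          rw [hu]
          show _ = h (h⁻¹ (v _))
          rw [Equiv.Perm.coe_inv, Equiv.apply_symm_apply]
        rw [this, he₁, gapp, moebius_coe, if_neg (by norm_num)]
        norm_num
      · show v _ = g _
        have : v (w₂ : OnePoint F) = h (u (w₂ : OnePoint F)) := by
          rw [hu]
          show _ = h (h⁻¹ (v _))
          rw [Equiv.Perm.coe_inv, Equiv.apply_symm_apply]
        rw [this, he₂, gapp, moebius_coe, if_neg (by norm_num)]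
        norm_num
    have hcard4 : ({∞, ((0:F) : OnePoint F), (w₁ : OnePoint F), (w₂ : OnePoint F)} :
        Set (OnePoint F)).ncard = 4 := by
      rw [Set.ncard_insert_of_notMem (by simp [OnePoint.coe_eq_coe]) (Set.toFinite _),
        Set.ncard_insert_of_notMem (by simp [OnePoint.coe_eq_coe, Ne.symm hw₁, Ne.symm hw₂])
          (Set.toFinite _),
        Set.ncard_insert_of_notMem (by simp [OnePoint.coe_eq_coe, hne]) (Set.toFinite _),
        Set.ncard_singleton]
    have : 4 ≤ {x : OnePoint F | v x = g x}.ncard := by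
      rw [← hcard4]
      exact Set.ncard_le_ncard hsub (Set.toFinite _)
    exact absurd (H g hgm) (by omega)
  -- extract the finite part of u
  have hex : ∀ w : F, ∃ s : F, u (w : OnePoint F) = (s : OnePoint F) := by
    intro w
    cases hu2 : u (w : OnePoint F) with
    | infty =>
      exfalso
      exact OnePoint.coe_ne_infty w (u.injective (hu2.trans hu_inf.symm))
    | coe s => exact ⟨s, rfl⟩
  choose f hf using hex
  have hfinj : Function.Injective f := by
    intro w₁ w₂ he
    have h1 : u (w₁ : OnePoint F) = u (w₂ : OnePoint F) := by rw [hf w₁, hf w₂, he]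
    exact OnePoint.coe_injective (u.injective h1)
  have hfne : ∀ w : F, w ≠ 0 → f w ≠ 0 := by
    intro w hw hfw
    apply hw
    have h1 : u (w : OnePoint F) = u ((0:F) : OnePoint F) := by
      rw [hf w, hfw, hu_zero]
    exact OnePoint.coe_injective (u.injective h1)
  set S : Finset F := Finset.univ.erase 0 with hS
  have hmem : ∀ w ∈ S, f w ∈ S := fun w hw =>
    Finset.mem_erase.mpr ⟨hfne w (Finset.mem_erase.mp hw).1, Finset.mem_univ _⟩
  have himg : S.image f = S := by
    apply Finset.eq_of_subset_of_card_le
    · intro y hy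
      obtain ⟨w, hw, rfl⟩ := Finset.mem_image.mp hy
      exact hmem w hw
    · rw [Finset.card_image_of_injective _ hfinj]
  have hprod_f : ∏ w ∈ S, f w = ∏ w ∈ S, w := by
    conv_rhs => rw [← himg]
    rw [Finset.prod_image (fun a _ b _ h => hfinj h)]
  have hφne : ∀ w ∈ S, f w * w⁻¹ ∈ S := by
    intro w hw
    have hw0 : w ≠ 0 := (Finset.mem_erase.mp hw).1
    exact Finset.mem_erase.mpr
      ⟨mul_ne_zero (hfne w hw0) (inv_ne_zero hw0), Finset.mem_univ _⟩
  have hφinj : ∀ w₁ ∈ S, ∀ w₂ ∈ S, f w₁ * w₁⁻¹ = f w₂ * w₂⁻¹ → w₁ = w₂ := by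
    intro w₁ h₁ w₂ h₂ he
    have hw₁ : w₁ ≠ 0 := (Finset.mem_erase.mp h₁).1
    have hw₂ : w₂ ≠ 0 := (Finset.mem_erase.mp h₂).1
    have ha : f w₁ * w₁⁻¹ ≠ 0 := mul_ne_zero (hfne _ hw₁) (inv_ne_zero hw₁)
    have e₁ : f w₁ = (f w₁ * w₁⁻¹) * w₁ := by field_simp
    have e₂ : f w₂ = (f w₁ * w₁⁻¹) * w₂ := by rw [he]; field_simp
    exact key (f w₁ * w₁⁻¹) ha w₁ w₂ hw₁ hw₂
      (by rw [hf w₁]; exact OnePoint.coe_eq_coe.mpr e₁)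
      (by rw [hf w₂]; exact OnePoint.coe_eq_coe.mpr e₂)
  have himgφ : S.image (fun w => f w * w⁻¹) = S := by
    apply Finset.eq_of_subset_of_card_le
    · intro y hy
      obtain ⟨w, hw, rfl⟩ := Finset.mem_image.mp hy
      exact hφne w hw
    · rw [Finset.card_image_of_injOn (fun a ha b hb h => hφinj a ha b hb h)]
  have hone : ∏ w ∈ S, (f w * w⁻¹) = 1 := by
    rw [Finset.prod_mul_distrib, hprod_f, Finset.prod_inv_distrib, mul_inv_cancel₀]
    rw [prod_nonzero_eq_neg_one]
    exact neg_ne_zero.mpr one_ne_zero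
  have hneg : ∏ w ∈ S, (f w * w⁻¹) = -1 := by
    have himg2 : ∏ y ∈ S.image (fun w => f w * w⁻¹), y = ∏ w ∈ S, (f w * w⁻¹) :=
      Finset.prod_image (f := fun y => y) (fun a ha b hb h => hφinj a ha b hb h)
    rw [← himg2, himgφ, prod_nonzero_eq_neg_one]
  rw [hone] at hneg
  have h2 : (2:F) = 0 := by linear_combination hneg
  have hp : Nat.Prime (ringChar F) := CharP.char_is_prime F (ringChar F)
  have hdvd : ringChar F ∣ 2 := by
    rw [← CharP.cast_eq_zero_iff F (ringChar F) 2]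
    exact_mod_cast h2
  exact hchar ((Nat.prime_dvd_prime_iff_eq hp Nat.prime_two).mp hdvd)

end OddCore


section Constructions
variable [Fintype F]

noncomputable def extPerm (e : F ≃ F) : Equiv.Perm (OnePoint F) := Equiv.optionCongr e

lemma extPerm_infty (e : F ≃ F) : extPerm e ∞ = ∞ := rfl
lemma extPerm_coe (e : F ≃ F) (t : F) :
    extPerm e (t : OnePoint F) = ((e t : F) : OnePoint F) := rfl

lemma exists_far_even (h2 : ringChar F = 2) :
    ∃ v : Equiv.Perm (OnePoint F), ∀ g ∈ PGLset F, {x : OnePoint F | v x = g x}.ncard ≤ 3 := by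
  have h2' : (2 : F) = 0 := by
    have := ringChar.Nat.cast_ringChar (R := F)
    rw [h2] at this
    exact_mod_cast this
  have hinj : Function.Injective (fun x : F => x * x) := by
    intro x y h
    simp only at h
    have hz : (x - y) * (x - y) = 0 := by linear_combination h + (y*y - x*y) * h2'
    exact sub_eq_zero.mp (mul_self_eq_zero.mp hz)
  set e : F ≃ F := Equiv.ofBijective _ (Finite.injective_iff_bijective.mp hinj) with he
  have he_app : ∀ t : F, e t = t * t := fun t => rfl
  refine ⟨extPerm e, ?_⟩
  rintro g ⟨a, b, c, d, hdet, hg⟩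
  have hset : {x : OnePoint F | extPerm e x = g x}
      = {x : OnePoint F | extPerm e x = moebius a b c d x} := by
    ext x; rw [Set.mem_setOf_eq, Set.mem_setOf_eq, hg x]
  rw [hset]
  by_cases hc : c = 0
  · have hd : d ≠ 0 := by
      intro h0; apply hdet; rw [hc, h0]; ring
    set P : Polynomial F :=
      Polynomial.C d * Polynomial.X ^ 2 - Polynomial.C a * Polynomial.X - Polynomial.C b with hP
    have hPne : P ≠ 0 := by
      intro h0
      apply hd
      have := congrArg (fun Q : Polynomial F => Polynomial.coeff Q 2) h0
      simpa [hP, Polynomial.coeff_one, Polynomial.coeff_C] using this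
    have hdeg : P.natDegree ≤ 2 := by rw [hP]; compute_degree
    have hroot : ∀ t : F, extPerm e (t : OnePoint F) = moebius a b c d (t : OnePoint F) →
        Polynomial.eval t P = 0 := by
      intro t ht
      rw [extPerm_coe, moebius_coe, hc] at ht
      rw [if_neg (by simpa using hd)] at ht
      have hteq := OnePoint.coe_eq_coe.mp ht
      rw [he_app] at hteq
      simp only [hP, Polynomial.eval_sub, Polynomial.eval_mul, Polynomial.eval_pow,
        Polynomial.eval_C, Polynomial.eval_X]
      rw [eq_div_iff (show (0:F)*t + d ≠ 0 by simpa using hd)] at hteq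
      linear_combination hteq
    calc {x : OnePoint F | extPerm e x = moebius a b c d x}.ncard
        ≤ P.natDegree + 1 := agree_ncard_le _ _ P hPne hroot
      _ ≤ 3 := by omega
  · set P : Polynomial F := Polynomial.C c * Polynomial.X ^ 3 + Polynomial.C d * Polynomial.X ^ 2
      - Polynomial.C a * Polynomial.X - Polynomial.C b with hP
    have hPne : P ≠ 0 := by
      intro h0
      apply hc
      have := congrArg (fun Q : Polynomial F => Polynomial.coeff Q 3) h0
      simpa [hP, Polynomial.coeff_one, Polynomial.coeff_C] using this
    have hdeg : P.natDegree ≤ 3 := by rw [hP]; compute_degree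
    have hinfty : extPerm e ∞ ≠ moebius a b c d ∞ := by
      rw [extPerm_infty, moebius_infty, if_neg hc]
      exact OnePoint.infty_ne_coe _
    have hroot : ∀ t : F, extPerm e (t : OnePoint F) = moebius a b c d (t : OnePoint F) →
        Polynomial.eval t P = 0 := by
      intro t ht
      rw [extPerm_coe, moebius_coe] at ht
      by_cases hpole : c * t + d = 0
      · rw [if_pos hpole] at ht
        exact absurd ht (OnePoint.coe_ne_infty _)
      · rw [if_neg hpole] at ht
        have hteq := OnePoint.coe_eq_coe.mp ht
        rw [he_app] at hteq
        simp only [hP, Polynomial.eval_sub, Polynomial.eval_add, Polynomial.eval_mul,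
          Polynomial.eval_pow, Polynomial.eval_C, Polynomial.eval_X]
        rw [eq_div_iff hpole] at hteq
        linear_combination hteq
    calc {x : OnePoint F | extPerm e x = moebius a b c d x}.ncard
        ≤ P.natDegree := agree_ncard_le_of_ne_infty _ _ P hPne hinfty hroot
      _ ≤ 3 := hdeg

lemma cube_inj (h3 : ¬ (3 ∣ (Fintype.card F - 1))) : Function.Injective (fun x : F => x^3) := by
  intro x y h
  simp only at h
  rcases eq_or_ne y 0 with rfl | hy
  · rw [zero_pow (by norm_num)] at h
    exact pow_eq_zero_iff (by norm_num) |>.mp h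
  rcases eq_or_ne x 0 with rfl | hx
  · rw [zero_pow (by norm_num)] at h
    exact (pow_eq_zero_iff (n := 3) (by norm_num) |>.mp h.symm).symm
  set zu : Fˣ := Units.mk0 x hx * (Units.mk0 y hy)⁻¹ with hzu
  have hz3 : zu ^ 3 = 1 := by
    ext
    push_cast [hzu, Units.val_mk0]
    field_simp
    linear_combination h
  have hdvd3 : orderOf zu ∣ 3 := orderOf_dvd_of_pow_eq_one hz3
  have hdvdcard : orderOf zu ∣ Fintype.card F - 1 := by
    rw [← Fintype.card_units (α := F)]
    exact orderOf_dvd_card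
  have h1 : orderOf zu = 1 := by
    rcases (Nat.dvd_prime Nat.prime_three).mp hdvd3 with h' | h'
    · exact h'
    · exact absurd (h' ▸ hdvdcard) h3
  have : zu = 1 := orderOf_eq_one_iff.mp h1
  have hxy : x * y⁻¹ = 1 := by
    have := congrArg (Units.val) this
    push_cast [hzu] at this
    simpa using this
  field_simp at hxy
  exact hxy

lemma exists_far_cube (h3 : ¬ (3 ∣ (Fintype.card F - 1))) :
    ∃ v : Equiv.Perm (OnePoint F), ∀ g ∈ PGLset F, {x : OnePoint F | v x = g x}.ncard ≤ 4 := by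
  set e : F ≃ F := Equiv.ofBijective _ (Finite.injective_iff_bijective.mp (cube_inj h3)) with he
  have he_app : ∀ t : F, e t = t ^ 3 := fun t => rfl
  refine ⟨extPerm e, ?_⟩
  rintro g ⟨a, b, c, d, hdet, hg⟩
  have hset : {x : OnePoint F | extPerm e x = g x}
      = {x : OnePoint F | extPerm e x = moebius a b c d x} := by
    ext x; rw [Set.mem_setOf_eq, Set.mem_setOf_eq, hg x]
  rw [hset]
  by_cases hc : c = 0
  · have hd : d ≠ 0 := by
      intro h0; apply hdet; rw [hc, h0]; ring
    set P : Polynomial F :=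
      Polynomial.C d * Polynomial.X ^ 3 - Polynomial.C a * Polynomial.X - Polynomial.C b with hP
    have hPne : P ≠ 0 := by
      intro h0
      apply hd
      have := congrArg (fun Q : Polynomial F => Polynomial.coeff Q 3) h0
      simpa [hP, Polynomial.coeff_one, Polynomial.coeff_C] using this
    have hdeg : P.natDegree ≤ 3 := by rw [hP]; compute_degree
    have hroot : ∀ t : F, extPerm e (t : OnePoint F) = moebius a b c d (t : OnePoint F) →
        Polynomial.eval t P = 0 := by
      intro t ht
      rw [extPerm_coe, moebius_coe, hc] at ht
      rw [if_neg (by simpa using hd)] at ht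
      have hteq := OnePoint.coe_eq_coe.mp ht
      rw [he_app] at hteq
      simp only [hP, Polynomial.eval_sub, Polynomial.eval_mul, Polynomial.eval_pow,
        Polynomial.eval_C, Polynomial.eval_X]
      rw [eq_div_iff (show (0:F)*t + d ≠ 0 by simpa using hd)] at hteq
      linear_combination hteq
    calc {x : OnePoint F | extPerm e x = moebius a b c d x}.ncard
        ≤ P.natDegree + 1 := agree_ncard_le _ _ P hPne hroot
      _ ≤ 4 := by omega
  · set P : Polynomial F := Polynomial.C c * Polynomial.X ^ 4 + Polynomial.C d * Polynomial.X ^ 3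
      - Polynomial.C a * Polynomial.X - Polynomial.C b with hP
    have hPne : P ≠ 0 := by
      intro h0
      apply hc
      have := congrArg (fun Q : Polynomial F => Polynomial.coeff Q 4) h0
      simpa [hP, Polynomial.coeff_one, Polynomial.coeff_C] using this
    have hdeg : P.natDegree ≤ 4 := by rw [hP]; compute_degree
    have hinfty : extPerm e ∞ ≠ moebius a b c d ∞ := by
      rw [extPerm_infty, moebius_infty, if_neg hc]
      exact OnePoint.infty_ne_coe _
    have hroot : ∀ t : F, extPerm e (t : OnePoint F) = moebius a b c d (t : OnePoint F) →
        Polynomial.eval t P = 0 := by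
      intro t ht
      rw [extPerm_coe, moebius_coe] at ht
      by_cases hpole : c * t + d = 0
      · rw [if_pos hpole] at ht
        exact absurd ht (OnePoint.coe_ne_infty _)
      · rw [if_neg hpole] at ht
        have hteq := OnePoint.coe_eq_coe.mp ht
        rw [he_app] at hteq
        simp only [hP, Polynomial.eval_sub, Polynomial.eval_add, Polynomial.eval_mul,
          Polynomial.eval_pow, Polynomial.eval_C, Polynomial.eval_X]
        rw [eq_div_iff hpole] at hteq
        linear_combination hteq
    calc {x : OnePoint F | extPerm e x = moebius a b c d x}.ncard
        ≤ P.natDegree := agree_ncard_le_of_ne_infty _ _ P hPne hinfty hroot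
      _ ≤ 4 := hdeg

lemma two_ne_zero' (h2 : ringChar F ≠ 2) : (2 : F) ≠ 0 := by
  intro h0
  apply h2
  have hp : Nat.Prime (ringChar F) := CharP.char_is_prime F (ringChar F)
  have hdvd : ringChar F ∣ 2 := by
    rw [← CharP.cast_eq_zero_iff F (ringChar F) 2]
    exact_mod_cast h0
  exact (Nat.prime_dvd_prime_iff_eq hp Nat.prime_two).mp hdvd

lemma three_ne_zero' (h3 : 3 ∣ (Fintype.card F - 1)) : (3 : F) ≠ 0 := by
  intro h0
  have hp : Nat.Prime (ringChar F) := CharP.char_is_prime F (ringChar F)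
  have hdvd : ringChar F ∣ 3 := by
    rw [← CharP.cast_eq_zero_iff F (ringChar F) 3]
    exact_mod_cast h0
  have hchar3 : ringChar F = 3 := (Nat.prime_dvd_prime_iff_eq hp Nat.prime_three).mp hdvd
  obtain ⟨n, hcard⟩ := FiniteField.card F (ringChar F)
  have h3card : 3 ∣ Fintype.card F := by
    rw [hcard.2, ← hchar3]
    exact dvd_pow_self _ (by positivity)
  have hge : 1 ≤ Fintype.card F := Fintype.card_pos
  omega

lemma exists_far_redei (h2 : ringChar F ≠ 2) (h3 : 3 ∣ (Fintype.card F - 1)) :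
    ∃ v : Equiv.Perm (OnePoint F), ∀ g ∈ PGLset F, {x : OnePoint F | v x = g x}.ncard ≤ 4 := by
  have h2' : (2 : F) ≠ 0 := two_ne_zero' h2
  have h3' : (3 : F) ≠ 0 := three_ne_zero' h3
  -- a primitive cube root of unity
  haveI : Fact (Nat.Prime 3) := ⟨Nat.prime_three⟩
  obtain ⟨ζ, hζ⟩ := exists_prime_orderOf_dvd_card (G := Fˣ) 3
    (by rw [Fintype.card_units]; exact h3)
  have hω3 : (ζ : F) ^ 3 = 1 := by
    have hζ3 : ζ ^ 3 = 1 := by rw [← hζ]; exact pow_orderOf_eq_one ζ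
    simpa using congrArg Units.val hζ3
  have hω1 : (ζ : F) ≠ 1 := by
    intro h0
    have : ζ = 1 := Units.ext h0
    rw [this] at hζ
    simp at hζ
  have hquad : (ζ : F)^2 + (ζ : F) + 1 = 0 := by
    have hfac : ((ζ : F) - 1) * ((ζ : F)^2 + (ζ : F) + 1) = 0 := by
      linear_combination hω3
    exact (mul_eq_zero.mp hfac).resolve_left (sub_ne_zero.mpr hω1)
  set s : F := 2*(ζ : F) + 1 with hs_def
  have hs : s^2 = -3 := by rw [hs_def]; linear_combination 4*hquad
  have hs0 : s ≠ 0 := by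
    intro h0
    apply h3'
    have : (-3 : F) = 0 := by rw [← hs, h0]; ring
    linear_combination -this
  -- a nonsquare
  obtain ⟨p, hnsq⟩ := FiniteField.exists_nonsquare (F := F) h2
  have hp0 : p ≠ 0 := by
    intro h0
    exact hnsq ⟨0, by rw [h0]; ring⟩
  -- the denominator never vanishes
  have hden : ∀ t : F, 3*t^2 + p ≠ 0 := by
    intro t h0
    exact hnsq ⟨s*t, by linear_combination h0 - t^2*hs⟩
  -- injectivity of the Rédei function
  have hinj : Function.Injective (fun t : F => (t^3 + 3*p*t)/(3*t^2 + p)) := by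
    intro x y h
    simp only at h
    by_contra hxy
    rw [div_eq_div_iff (hden x) (hden y)] at h
    have hE : 3*x^2*y^2 + p*x^2 + p*y^2 - 8*p*x*y + 3*p^2 = 0 := by
      have hfac : (x - y) * (3*x^2*y^2 + p*x^2 + p*y^2 - 8*p*x*y + 3*p^2) = 0 := by
        linear_combination h
      exact (mul_eq_zero.mp hfac).resolve_left (sub_ne_zero.mpr hxy)
    have hya : y^2 - p ≠ 0 := by
      intro h0
      exact hnsq ⟨y, by linear_combination -h0⟩
    have key : (2*(3*y^2+p)*x - 8*p*y)^2 = -12*p*(y^2-p)^2 := by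
      linear_combination (4*(3*y^2+p))*hE
    apply hnsq
    have hdenom : 2*s*(y^2 - p) ≠ 0 := mul_ne_zero (mul_ne_zero h2' hs0) hya
    refine ⟨(2*(3*y^2+p)*x - 8*p*y) / (2*s*(y^2-p)), ?_⟩
    rw [div_mul_div_comm, eq_div_iff (mul_ne_zero hdenom hdenom)]
    linear_combination -key + (4*p*(y^2-p)^2)*hs
  set e : F ≃ F := Equiv.ofBijective _ (Finite.injective_iff_bijective.mp hinj) with he
  have he_app : ∀ t : F, e t = (t^3 + 3*p*t)/(3*t^2 + p) := fun t => rfl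
  refine ⟨extPerm e, ?_⟩
  rintro g ⟨a, b, c, d, hdet, hg⟩
  have hset : {x : OnePoint F | extPerm e x = g x}
      = {x : OnePoint F | extPerm e x = moebius a b c d x} := by
    ext x; rw [Set.mem_setOf_eq, Set.mem_setOf_eq, hg x]
  rw [hset]
  by_cases hc : c = 0
  · have hd : d ≠ 0 := by
      intro h0; apply hdet; rw [hc, h0]; ring
    have ha : a ≠ 0 := by
      intro h0; apply hdet; rw [hc, h0]; ring
    set P : Polynomial F := Polynomial.C (d - 3*a) * Polynomial.X ^ 3
      + Polynomial.C (-(3*b)) * Polynomial.X ^ 2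
      + Polynomial.C (3*p*d - p*a) * Polynomial.X + Polynomial.C (-(p*b)) with hP
    have hPne : P ≠ 0 := by
      intro h0
      have e3 : d - 3*a = 0 := by
        have h' := congrArg (fun Q : Polynomial F => Polynomial.coeff Q 3) h0
        simp only [hP, Polynomial.coeff_add, Polynomial.coeff_C_mul, Polynomial.coeff_X_pow,
          Polynomial.coeff_C, Polynomial.coeff_X, Polynomial.coeff_zero] at h'
        norm_num at h'
        linear_combination h'
      have hb : b = 0 := by
        have h' := congrArg (fun Q : Polynomial F => Polynomial.coeff Q 2) h0
        simp only [hP, Polynomial.coeff_add, Polynomial.coeff_C_mul, Polynomial.coeff_X_pow,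
          Polynomial.coeff_C, Polynomial.coeff_X, Polynomial.coeff_zero] at h'
        norm_num at h'
        exact h'.resolve_left h3'
      have e1 : 3*p*d - p*a = 0 := by
        have h' := congrArg (fun Q : Polynomial F => Polynomial.coeff Q 1) h0
        simp only [hP, Polynomial.coeff_add, Polynomial.coeff_C_mul, Polynomial.coeff_X_pow,
          Polynomial.coeff_C, Polynomial.coeff_X, Polynomial.coeff_zero] at h'
        norm_num at h'
        linear_combination h'
      have h31 : 3*d - a = 0 := by
        have hpq : p*(3*d - a) = 0 := by linear_combination e1
        exact (mul_eq_zero.mp hpq).resolve_left hp0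
      have h8a : (8:F)*a = 0 := by linear_combination (-3)*e3 + h31
      have h80 : (8:F) ≠ 0 := by
        have := pow_ne_zero 3 h2'
        norm_num at this
        exact this
      exact ha ((mul_eq_zero.mp h8a).resolve_left h80)
    have hdeg : P.natDegree ≤ 3 := by rw [hP]; compute_degree
    have hroot : ∀ t : F, extPerm e (t : OnePoint F) = moebius a b c d (t : OnePoint F) →
        Polynomial.eval t P = 0 := by
      intro t ht
      rw [extPerm_coe, moebius_coe, hc] at ht
      rw [if_neg (by simpa using hd)] at ht
      have hteq := OnePoint.coe_eq_coe.mp ht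
      rw [he_app] at hteq
      rw [div_eq_div_iff (hden t) (by simpa using hd)] at hteq
      simp only [hP, Polynomial.eval_add, Polynomial.eval_mul, Polynomial.eval_pow,
        Polynomial.eval_C, Polynomial.eval_X]
      linear_combination hteq
    calc {x : OnePoint F | extPerm e x = moebius a b c d x}.ncard
        ≤ P.natDegree + 1 := agree_ncard_le _ _ P hPne hroot
      _ ≤ 4 := by omega
  · set P : Polynomial F := Polynomial.C c * Polynomial.X ^ 4
      + Polynomial.C (d - 3*a) * Polynomial.X ^ 3
      + Polynomial.C (3*p*c - 3*b) * Polynomial.X ^ 2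
      + Polynomial.C (3*p*d - p*a) * Polynomial.X + Polynomial.C (-(p*b)) with hP
    have hPne : P ≠ 0 := by
      intro h0
      apply hc
      have h' := congrArg (fun Q : Polynomial F => Polynomial.coeff Q 4) h0
      simp only [hP, Polynomial.coeff_add, Polynomial.coeff_C_mul, Polynomial.coeff_X_pow,
        Polynomial.coeff_C, Polynomial.coeff_X, Polynomial.coeff_zero] at h'
      norm_num at h'
      linear_combination h'
    have hdeg : P.natDegree ≤ 4 := by rw [hP]; compute_degree
    have hinfty : extPerm e ∞ ≠ moebius a b c d ∞ := by
      rw [extPerm_infty, moebius_infty, if_neg hc]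
      exact OnePoint.infty_ne_coe _
    have hroot : ∀ t : F, extPerm e (t : OnePoint F) = moebius a b c d (t : OnePoint F) →
        Polynomial.eval t P = 0 := by
      intro t ht
      rw [extPerm_coe, moebius_coe] at ht
      by_cases hpole : c * t + d = 0
      · rw [if_pos hpole] at ht
        exact absurd ht (OnePoint.coe_ne_infty _)
      · rw [if_neg hpole] at ht
        have hteq := OnePoint.coe_eq_coe.mp ht
        rw [he_app] at hteq
        rw [div_eq_div_iff (hden t) hpole] at hteq
        simp only [hP, Polynomial.eval_add, Polynomial.eval_mul, Polynomial.eval_pow,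
          Polynomial.eval_C, Polynomial.eval_X]
        linear_combination hteq
    calc {x : OnePoint F | extPerm e x = moebius a b c d x}.ncard
        ≤ P.natDegree := agree_ncard_le_of_ne_infty _ _ P hPne hinfty hroot
      _ ≤ 4 := hdeg

end Constructions


section Assembly
variable [Fintype F]

lemma exists_agree3 (v : Equiv.Perm (OnePoint F)) :
    ∃ g ∈ PGLset F, 3 ≤ {x : OnePoint F | v x = g x}.ncard := by
  have h01 : ((0:F) : OnePoint F) ≠ ((1:F) : OnePoint F) := by
    rw [Ne, OnePoint.coe_eq_coe]
    exact zero_ne_one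
  obtain ⟨g, hg, h1, h2, h3⟩ := exists_pgl_triple ∞ ((0:F) : OnePoint F) ((1:F) : OnePoint F)
    (v ∞) (v ((0:F) : OnePoint F)) (v ((1:F) : OnePoint F))
    (by simp) (by simp) h01
    (v.injective.ne (by simp)) (v.injective.ne (by simp)) (v.injective.ne h01)
  refine ⟨g, hg, ?_⟩
  have hsub : ({∞, ((0:F) : OnePoint F), ((1:F) : OnePoint F)} : Set (OnePoint F))
      ⊆ {x : OnePoint F | v x = g x} := by
    intro x hx
    simp only [Set.mem_insert_iff, Set.mem_singleton_iff] at hx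
    rcases hx with rfl | rfl | rfl
    exacts [h1.symm, h2.symm, h3.symm]
  have hcard : ({∞, ((0:F) : OnePoint F), ((1:F) : OnePoint F)} : Set (OnePoint F)).ncard = 3 := by
    rw [Set.ncard_insert_of_notMem (by simp) (Set.toFinite _), Set.ncard_pair h01]
  rw [← hcard]
  exact Set.ncard_le_ncard hsub (Set.toFinite _)

lemma coveringRadius_eq_of (k : ℕ)
    (hup : ∀ v : Equiv.Perm (OnePoint F), ∃ g ∈ PGLset F, k ≤ {x : OnePoint F | v x = g x}.ncard)
    (hlow : ∃ v : Equiv.Perm (OnePoint F), ∀ g ∈ PGLset F, {x : OnePoint F | v x = g x}.ncard ≤ k) :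
    coveringRadius (PGLset F) = Fintype.card (OnePoint F) - k := by
  set N := Fintype.card (OnePoint F) with hN
  set S := {n | ∃ v : Equiv.Perm (OnePoint F),
    n = sInf {m | ∃ c ∈ PGLset F, m = permDist v c}} with hS
  have hub : ∀ n ∈ S, n ≤ N - k := by
    rintro n ⟨v, rfl⟩
    obtain ⟨g, hg, hge⟩ := hup v
    exact le_trans (Nat.sInf_le ⟨g, hg, rfl⟩) (permDist_le_of_agree v g k hge)
  obtain ⟨v₀, hv₀⟩ := hlow
  have hmemv : sInf {m | ∃ c ∈ PGLset F, m = permDist v₀ c} ∈ S := ⟨v₀, rfl⟩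
  have hlb : N - k ≤ sInf {m | ∃ c ∈ PGLset F, m = permDist v₀ c} := by
    apply le_csInf
    · exact ⟨permDist v₀ 1, 1, one_mem_PGLset, rfl⟩
    · rintro m ⟨g, hg, rfl⟩
      exact le_permDist_of_agree v₀ g k (hv₀ g hg)
  show sSup S = N - k
  apply le_antisymm
  · exact csSup_le ⟨_, hmemv⟩ hub
  · exact le_trans hlb (le_csSup ⟨N - k, hub⟩ hmemv)

end Assembly

end CRPGL

/-- For every prime power `q`, the covering radius of `PGL₂(q)`, viewed as a set of
permutations of the projective line `Ω = F_q ∪ {∞}`, equals `q - 2` if `q` is even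
and `q - 3` if `q` is odd. -/
theorem coveringRadius_PGL2
    (q : ℕ) (hq : IsPrimePow q)
    (F : Type*) [Field F] [Fintype F] (hF : Fintype.card F = q) :
    (Even q → coveringRadius (PGLset F) = q - 2) ∧
    (Odd q → coveringRadius (PGLset F) = q - 3) := by
  have hq2 : 2 ≤ q := hq.two_le
  have hcard : Fintype.card (OnePoint F) = q + 1 := by
    rw [CRPGL.card_onePoint, hF]
  constructor
  · intro hEven
    have hchar : ringChar F = 2 := by
      rw [FiniteField.even_card_iff_char_two, hF]
      rcases hEven with ⟨m, hm⟩
      omega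
    rw [CRPGL.coveringRadius_eq_of 3 CRPGL.exists_agree3 (CRPGL.exists_far_even hchar), hcard]
    omega
  · intro hOdd
    have hq3 : 3 ≤ q := by
      rcases hOdd with ⟨m, hm⟩
      omega
    have hchar : ringChar F ≠ 2 := by
      intro h0
      have := FiniteField.even_card_of_char_two h0
      rw [hF] at this
      rcases hOdd with ⟨m, hm⟩
      omega
    have hlow : ∃ v : Equiv.Perm (OnePoint F),
        ∀ g ∈ PGLset F, {x : OnePoint F | v x = g x}.ncard ≤ 4 := by
      by_cases h3 : 3 ∣ (Fintype.card F - 1)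
      · exact CRPGL.exists_far_redei hchar h3
      · exact CRPGL.exists_far_cube h3
    rw [CRPGL.coveringRadius_eq_of 4 (CRPGL.exists_agree4 hchar) hlow, hcard]
    omega
end

section
/- Let q be a prime power with q ≡ 1 (mod 6). Then there exists a permutation v of the projective line Ω = F_q ∪ {∞} such that for every g in PGL₂(q) (acting on Ω by fractional linear transformations), the number of points x ∈ Ω with v(x) = g(x) is at most 4; consequently the Hamming distance from v to every element of PGL₂(q) is at least q − 3. -/
open scoped OnePoint

open scoped Classical in
lemma moebius_coe {F : Type*} [Field F] (a b c e t : F) :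
    moebius a b c e (t : OnePoint F) =
      if c * t + e = 0 then ∞ else (((a * t + b) / (c * t + e) : F) : OnePoint F) := rfl

open scoped Classical in
lemma moebius_infty {F : Type*} [Field F] (a b c e : F) :
    moebius a b c e ∞ = if c = 0 then ∞ else ((a / c : F) : OnePoint F) := rfl

/-- Counting lemma: a set of points of the projective line all of whose members are
(coercions of) roots of a nonzero polynomial has size at most the degree. -/
lemma count_roots_aux {F : Type*} [Field F] (S : Set (OnePoint F)) (P : Polynomial F)
    (hP0 : P ≠ 0) (hS : ∀ x ∈ S, ∃ t : F, x = (t : OnePoint F) ∧ P.eval t = 0) :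
    S.ncard ≤ P.natDegree := by
  classical
  have hsub : S ⊆ ↑(P.roots.toFinset.image (fun t => OnePoint.some t)) := by
    intro x hx
    obtain ⟨t, rfl, ht⟩ := hS x hx
    exact Finset.mem_coe.mpr (Finset.mem_image.mpr
      ⟨t, Multiset.mem_toFinset.mpr ((Polynomial.mem_roots hP0).mpr ht), rfl⟩)
  calc S.ncard ≤ _ := Set.ncard_le_ncard hsub (Finset.finite_toSet _)
    _ = _ := Set.ncard_coe_finset _
    _ ≤ (P.roots.toFinset).card := Finset.card_image_le
    _ ≤ Multiset.card P.roots := Multiset.toFinset_card_le _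
    _ ≤ P.natDegree := Polynomial.card_roots' P

/-- Variant allowing also the point `∞`. -/
lemma count_roots_aux' {F : Type*} [Field F] (S : Set (OnePoint F)) (P : Polynomial F)
    (hP0 : P ≠ 0) (hS : ∀ x ∈ S, x = ∞ ∨ ∃ t : F, x = (t : OnePoint F) ∧ P.eval t = 0) :
    S.ncard ≤ P.natDegree + 1 := by
  classical
  have hsub : S ⊆ ↑(insert ∞ (P.roots.toFinset.image (fun t => OnePoint.some t))) := by
    intro x hx
    rcases hS x hx with rfl | ⟨t, rfl, ht⟩
    · simp
    · exact Finset.mem_coe.mpr (Finset.mem_insert.mpr (Or.inr (Finset.mem_image.mpr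
        ⟨t, Multiset.mem_toFinset.mpr ((Polynomial.mem_roots hP0).mpr ht), rfl⟩)))
  calc S.ncard ≤ _ := Set.ncard_le_ncard hsub (Finset.finite_toSet _)
    _ = _ := Set.ncard_coe_finset _
    _ ≤ (P.roots.toFinset.image (fun t => OnePoint.some t)).card + 1 := Finset.card_insert_le _ _
    _ ≤ (P.roots.toFinset).card + 1 := Nat.add_le_add_right Finset.card_image_le 1
    _ ≤ Multiset.card P.roots + 1 := Nat.add_le_add_right (Multiset.toFinset_card_le _) 1
    _ ≤ P.natDegree + 1 := Nat.add_le_add_right (Polynomial.card_roots' P) 1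

/-- If `q ≡ 1 (mod 6)` is a prime power, then there is a permutation `v` of the projective
line `Ω = F_q ∪ {∞}` agreeing with every element of `PGL₂(q)` in at most `4` points;
consequently `v` has Hamming distance at least `q - 3` from every element of `PGL₂(q)`. -/
theorem exists_perm_far_from_PGL2
    (q : ℕ) (hq : IsPrimePow q) (hmod : q % 6 = 1)
    (F : Type*) [Field F] [Fintype F] (hF : Fintype.card F = q) :
    ∃ v : Equiv.Perm (OnePoint F),
      (∀ g ∈ PGLset F, {x : OnePoint F | v x = g x}.ncard ≤ 4) ∧
      (∀ g ∈ PGLset F, q - 3 ≤ permDist v g) := by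
  classical
  -- characteristic facts
  obtain ⟨n, hp, hcard⟩ := FiniteField.card F (ringChar F)
  have hpdvdq : ringChar F ∣ q := by
    rw [← hF, hcard]
    exact dvd_pow_self _ (by exact_mod_cast n.ne_zero)
  have hp2 : ringChar F ≠ 2 := by
    intro h; rw [h] at hpdvdq; omega
  have hp3 : ringChar F ≠ 3 := by
    intro h; rw [h] at hpdvdq; omega
  have h2 : (2 : F) ≠ 0 := by
    intro h
    exact hp2 ((Nat.prime_dvd_prime_iff_eq hp Nat.prime_two).mp
      ((CharP.cast_eq_zero_iff F (ringChar F) 2).mp h))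
  have h3 : (3 : F) ≠ 0 := by
    intro h
    exact hp3 ((Nat.prime_dvd_prime_iff_eq hp Nat.prime_three).mp
      ((CharP.cast_eq_zero_iff F (ringChar F) 3).mp h))
  -- a nonsquare d
  obtain ⟨d, hd⟩ := FiniteField.exists_nonsquare (F := F) hp2
  have hd0 : d ≠ 0 := fun h => hd ⟨0, by rw [h]; ring⟩
  -- a primitive cube root of unity, hence a square root of -3
  haveI : Fact (Nat.Prime 3) := ⟨Nat.prime_three⟩
  have h3q : 3 ∣ Fintype.card Fˣ := by
    rw [Fintype.card_units, hF]; omega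
  obtain ⟨u, hu⟩ := exists_prime_orderOf_dvd_card 3 h3q
  have hω3 : ((u : F)) ^ 3 = 1 := by
    have h := pow_orderOf_eq_one u
    rw [hu] at h
    have h' : ((u ^ 3 : Fˣ) : F) = ((1 : Fˣ) : F) := congrArg Units.val h
    push_cast at h'
    exact h'
  have hω1 : ((u : F)) ≠ 1 := by
    intro h
    have : u = 1 := Units.ext (by simpa using h)
    rw [this] at hu; simp at hu
  set ω : F := (u : F) with hωdef
  have hsum : ω ^ 2 + ω + 1 = 0 := by
    have hne : ω - 1 ≠ 0 := sub_ne_zero.mpr hω1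
    apply mul_left_cancel₀ hne
    linear_combination hω3
  have hs : (2 * ω + 1) ^ 2 = -3 := by linear_combination 4 * hsum
  have hsne : (2 * ω + 1) ≠ 0 := by
    intro h
    apply h3
    have h9 : ((2 * ω + 1) : F) ^ 2 = 0 := by rw [h]; ring
    rw [hs] at h9
    linear_combination -h9
  -- denominator never vanishes
  have hD : ∀ x : F, 3 * x ^ 2 + d ≠ 0 := by
    intro x h
    exact hd ⟨(2 * ω + 1) * x, by linear_combination h - x ^ 2 * hs⟩
  -- injectivity of the Rédei map on F
  have hinjF : ∀ t u' : F,
      (t ^ 3 + 3 * d * t) * (3 * u' ^ 2 + d) = (u' ^ 3 + 3 * d * u') * (3 * t ^ 2 + d) → t = u' := by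
    intro t w h
    by_contra hne
    have htw : t - w ≠ 0 := sub_ne_zero.mpr hne
    have hQ : 3 * t ^ 2 * w ^ 2 + d * t ^ 2 + d * w ^ 2 - 8 * d * t * w + 3 * d ^ 2 = 0 := by
      apply mul_left_cancel₀ htw
      linear_combination h
    have hwd : w ^ 2 - d ≠ 0 := by
      intro h'
      exact hd ⟨w, by linear_combination -h'⟩
    have hwne : 2 * (2 * ω + 1) * (w ^ 2 - d) ≠ 0 :=
      mul_ne_zero (mul_ne_zero h2 hsne) hwd
    apply hd
    refine ⟨(2 * (3 * w ^ 2 + d) * t - 8 * d * w) / (2 * (2 * ω + 1) * (w ^ 2 - d)), ?_⟩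
    rw [div_mul_div_comm, eq_div_iff (mul_ne_zero hwne hwne)]
    linear_combination (-(4 * (3 * w ^ 2 + d))) * hQ + (4 * d * (w ^ 2 - d) ^ 2) * hs
  -- the permutation
  set v0 : OnePoint F → OnePoint F := fun x =>
    Option.elim x ∞ (fun t => (((t ^ 3 + 3 * d * t) / (3 * t ^ 2 + d) : F) : OnePoint F))
    with hv0def
  have hv0inf : v0 ∞ = ∞ := rfl
  have hv0coe : ∀ t : F, v0 (t : OnePoint F)
      = (((t ^ 3 + 3 * d * t) / (3 * t ^ 2 + d) : F) : OnePoint F) := fun t => rfl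
  have hv0inj : Function.Injective v0 := by
    intro x y hxy
    simp only [hv0def] at hxy
    rcases x with _ | t <;> rcases y with _ | w <;>
      simp only [Option.elim_none, Option.elim_some] at hxy
    · rfl
    · exact absurd hxy (by simp)
    · exact absurd hxy (by simp)
    · have h' : (t ^ 3 + 3 * d * t) / (3 * t ^ 2 + d)
          = (w ^ 3 + 3 * d * w) / (3 * w ^ 2 + d) := by exact_mod_cast hxy
      exact congrArg _ (hinjF t w ((div_eq_div_iff (hD t) (hD w)).mp h'))
  have hvbij : Function.Bijective v0 := Finite.injective_iff_bijective.mp hv0inj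
  set v : Equiv.Perm (OnePoint F) := Equiv.ofBijective v0 hvbij with hvdef
  have hvx : ∀ x, v x = v0 x := fun x => rfl
  have hkey : ∀ g ∈ PGLset F, {x : OnePoint F | v x = g x}.ncard ≤ 4 := by
    rintro g ⟨a, b, c, e, hdet, hg⟩
    rcases eq_or_ne c 0 with hc | hc
    · -- the affine case `c = 0`: a cubic equation plus the point at infinity
      subst hc
      have he : e ≠ 0 := by intro h; apply hdet; rw [h]; ring
      set P : Polynomial F := Polynomial.C (e - 3 * a) * Polynomial.X ^ 3
          + Polynomial.C (-(3 * b)) * Polynomial.X ^ 2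
          + Polynomial.C (3 * d * e - a * d) * Polynomial.X
          + Polynomial.C (-(b * d)) with hPdef
      have hdeg : P.natDegree ≤ 3 := by rw [hPdef]; compute_degree
      have h8ne : (8 : F) ≠ 0 := by
        have h' := pow_ne_zero 3 h2
        norm_num at h'
        exact h'
      have hP0 : P ≠ 0 := by
        intro h
        rw [hPdef] at h
        have c3 := congrArg (fun p => Polynomial.coeff p 3) h
        have c2 := congrArg (fun p => Polynomial.coeff p 2) h
        have c1 := congrArg (fun p => Polynomial.coeff p 1) h
        simp only [Polynomial.coeff_add, Polynomial.coeff_C_mul, Polynomial.coeff_X_pow,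
          Polynomial.coeff_X, Polynomial.coeff_C, Polynomial.coeff_zero] at c3 c2 c1
        norm_num at c3 c2 c1
        have hb : b = 0 := by
          rcases c2 with h' | h'
          · exact absurd h' h3
          · exact h'
        have ha : a = 0 := by
          have h8 : (8 : F) * d * a = 0 := by linear_combination c1 - 3 * d * c3
          rcases mul_eq_zero.mp h8 with h' | h'
          · rcases mul_eq_zero.mp h' with h'' | h''
            · exact absurd h'' h8ne
            · exact absurd h'' hd0
          · exact h'
        apply hdet
        have he3 : e = 3 * a := by linear_combination c3
        rw [ha, hb, he3, ha]; ring
      have hsub : ∀ x ∈ {x : OnePoint F | v x = g x},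
          x = ∞ ∨ ∃ t : F, x = (t : OnePoint F) ∧ P.eval t = 0 := by
        intro x hx
        simp only [Set.mem_setOf_eq, hvx, hg] at hx
        rcases x with _ | t
        · exact Or.inl rfl
        · right
          refine ⟨t, rfl, ?_⟩
          simp only [hv0def, Option.elim_some, moebius, Option.elim] at hx
          rw [if_neg (by simpa using he)] at hx
          have hff : (t ^ 3 + 3 * d * t) / (3 * t ^ 2 + d) = (a * t + b) / (0 * t + e) := by
            exact_mod_cast hx
          have hcross := (div_eq_div_iff (hD t) (by simpa using he)).mp hff
          rw [hPdef]
          simp only [Polynomial.eval_add, Polynomial.eval_mul, Polynomial.eval_pow,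
            Polynomial.eval_C, Polynomial.eval_X]
          linear_combination hcross
      calc {x : OnePoint F | v x = g x}.ncard ≤ P.natDegree + 1 :=
            count_roots_aux' _ P hP0 hsub
        _ ≤ 4 := by omega
    · -- the case `c ≠ 0`: a genuine quartic equation, and no agreement at infinity
      set P : Polynomial F := Polynomial.C c * Polynomial.X ^ 4
          + Polynomial.C (e - 3 * a) * Polynomial.X ^ 3
          + Polynomial.C (3 * d * c - 3 * b) * Polynomial.X ^ 2
          + Polynomial.C (3 * d * e - a * d) * Polynomial.X
          + Polynomial.C (-(b * d)) with hPdef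
      have hdeg : P.natDegree ≤ 4 := by rw [hPdef]; compute_degree
      have hP0 : P ≠ 0 := by
        intro h
        rw [hPdef] at h
        have c4 := congrArg (fun p => Polynomial.coeff p 4) h
        simp only [Polynomial.coeff_add, Polynomial.coeff_C_mul, Polynomial.coeff_X_pow,
          Polynomial.coeff_X, Polynomial.coeff_C, Polynomial.coeff_zero] at c4
        norm_num at c4
        exact hc c4
      have hsub : ∀ x ∈ {x : OnePoint F | v x = g x},
          ∃ t : F, x = (t : OnePoint F) ∧ P.eval t = 0 := by
        intro x hx
        simp only [Set.mem_setOf_eq, hvx, hg] at hx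
        rcases x with _ | t
        · exfalso
          simp only [hv0def, Option.elim_none, moebius, Option.elim] at hx
          rw [if_neg hc] at hx
          exact (OnePoint.infty_ne_coe _) hx
        · refine ⟨t, rfl, ?_⟩
          simp only [hv0def, Option.elim_some, moebius, Option.elim] at hx
          by_cases hpole : c * t + e = 0
          · rw [if_pos hpole] at hx
            exact absurd hx (OnePoint.coe_ne_infty _)
          · rw [if_neg hpole] at hx
            have hff : (t ^ 3 + 3 * d * t) / (3 * t ^ 2 + d) = (a * t + b) / (c * t + e) := by
              exact_mod_cast hx
            have hcross := (div_eq_div_iff (hD t) hpole).mp hff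
            rw [hPdef]
            simp only [Polynomial.eval_add, Polynomial.eval_mul, Polynomial.eval_pow,
              Polynomial.eval_C, Polynomial.eval_X]
            linear_combination hcross
      calc {x : OnePoint F | v x = g x}.ncard ≤ P.natDegree :=
            count_roots_aux _ P hP0 hsub
        _ ≤ 4 := hdeg
  refine ⟨v, hkey, ?_⟩
  intro g hg
  have h4 := hkey g hg
  have hfix : Function.fixedPoints ⇑(v * g⁻¹) = g '' {x : OnePoint F | v x = g x} := by
    ext y
    constructor
    · intro hy
      have hy' : v (g⁻¹ y) = y := hy
      refine ⟨g⁻¹ y, ?_, Equiv.apply_symm_apply g y⟩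
      show v (g⁻¹ y) = g (g⁻¹ y)
      rw [hy', show g (g⁻¹ y) = y from Equiv.apply_symm_apply g y]
    · rintro ⟨x, hx, rfl⟩
      show v (g⁻¹ (g x)) = g x
      rw [show g⁻¹ (g x) = x from Equiv.symm_apply_apply g x]
      exact hx
  have hcardΩ : Fintype.card (OnePoint F) = q + 1 := by
    rw [← hF]
    simp [OnePoint]
    rw [← Fintype.card_option (α := F)]
    exact Fintype.card_congr' rfl
  rw [permDist, hfix, Set.ncard_image_of_injective _ g.injective, hcardΩ]
  omega
end

section
/- Let q be an odd prime power and let ρ ∈ F_{q²} satisfy ρ^{q+1} = −1 and ρ ∉ F_q. Then for every x in the subfield F_q, the element y = (x + ρ)/(1 − ρx) of F_{q²} satisfies y^{q+1} = −1. -/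
/-- If `q` is an odd prime power and `ρ ∈ F_{q²}` satisfies `ρ^(q+1) = -1` and `ρ ∉ F_q`
(the fixed field of the Frobenius `y ↦ y^q`), then for every `x ∈ F_q` the element
`y = (x + ρ)/(1 - ρ*x)` satisfies `y^(q+1) = -1`. -/
theorem sigma_mem_Delta
    (q : ℕ) (hq : IsPrimePow q) (hodd : Odd q)
    (K : Type*) [Field K] [Fintype K] (hK : Fintype.card K = q ^ 2)
    (ρ : K) (hρ1 : ρ ^ (q + 1) = -1) (hρ2 : ρ ^ q ≠ ρ) :
    ∀ x : K, x ^ q = x → ((x + ρ) / (1 - ρ * x)) ^ (q + 1) = -1 := by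
  intro x hx
  obtain ⟨p, n, hp, hn, rfl⟩ := hq
  have hp' : p.Prime := hp.nat_prime
  have hcast : ((p : K)) = 0 := by
    have h0 : ((Fintype.card K : K)) = 0 := FiniteField.cast_card_eq_zero K
    rw [hK] at h0
    push_cast at h0
    exact pow_eq_zero_iff (n := n * 2) (by positivity) |>.mp
      (by rw [pow_mul]; exact_mod_cast h0)
  haveI : CharP K (ringChar K) := ringChar.charP K
  have hrc : ringChar K = p := by
    have hd : ringChar K ∣ p := ringChar.dvd hcast
    rcases (Nat.Prime.eq_one_or_self_of_dvd hp' _ hd) with h | h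
    · exact absurd h (CharP.ringChar_ne_one)
    · exact h
  haveI : CharP K p := hrc ▸ ringChar.charP K
  haveI : ExpChar K p := ExpChar.prime hp'
  have frob : ∀ a b : K, (a + b) ^ p ^ n = a ^ p ^ n + b ^ p ^ n := fun a b =>
    add_pow_expChar_pow ..
  have frobm : ∀ a b : K, (a - b) ^ p ^ n = a ^ p ^ n - b ^ p ^ n := fun a b =>
    sub_pow_expChar_pow ..
  have hρρ : (ρ ^ p ^ n) ^ p ^ n = ρ := by
    rw [← pow_mul, ← sq, ← hK]; exact FiniteField.pow_card ρ
  have h1 : 1 - ρ * x ≠ 0 := by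
    intro h
    have hx0 : x ≠ 0 := by rintro rfl; simp at h
    have hρx : ρ = x⁻¹ := by
      field_simp
      linear_combination -(sub_eq_zero.mp h)
    exact hρ2 (by rw [hρx, inv_pow, hx])
  have h2 : 1 - ρ ^ p ^ n * x ≠ 0 := by
    intro h
    have hx0 : x ≠ 0 := by rintro rfl; simp at h
    have hρx : ρ ^ p ^ n = x⁻¹ := by
      field_simp
      linear_combination -(sub_eq_zero.mp h)
    apply hρ2
    rw [hρx, ← hρρ, hρx, inv_pow, hx]
  have hyq : ((x + ρ) / (1 - ρ * x)) ^ p ^ n = (x + ρ ^ p ^ n) / (1 - ρ ^ p ^ n * x) := by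
    rw [div_pow, frob, hx, frobm, mul_pow, hx, one_pow]
  rw [pow_succ, hyq]
  have hρ1' : ρ ^ p ^ n * ρ = -1 := by rw [← pow_succ]; exact hρ1
  rw [div_mul_div_comm, div_eq_iff (mul_ne_zero h2 h1)]
  linear_combination (x ^ 2 + 1) * hρ1'
end

section
/- Let q be an odd prime power and let ρ ∈ F_{q²} satisfy ρ^{q+1} = −1 and ρ ∉ F_q. Define σ from Ω = F_q ∪ {∞} to Δ = {y ∈ F_{q²} : y^{q+1} = −1} by σ(x) = (x + ρ)/(1 − ρx) for x ∈ F_q and σ(∞) = −1/ρ. Then σ is a well-defined bijection from Ω onto Δ, whose inverse τ is given by τ(y) = (y − ρ)/(1 + ρy) for y ∈ Δ with 1 + ρy ≠ 0 and τ(−1/ρ) = ∞. -/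
open scoped OnePoint

/-- The map `σ : Ω = F_q ∪ {∞} → F_{q²}` given by `σ(x) = (x + ρ)/(1 - ρ*x)` for
`x ∈ F_q` (embedded in `F_{q²}` via `e`) and `σ(∞) = -1/ρ`. -/
noncomputable def sigmaMap {F K : Type*} [Field F] [Field K] (e : F →+* K) (ρ : K) :
    OnePoint F → K :=
  fun x => Option.elim x (-1 / ρ) (fun t => (e t + ρ) / (1 - ρ * e t))

/-- Let `q` be an odd prime power, `K = F_{q²}`, `F = F_q` embedded in `K` via `e`, and let
`ρ ∈ K` satisfy `ρ^(q+1) = -1` and `ρ ∉ F_q`. Then `σ : Ω = F_q ∪ {∞} → K`, defined by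
`σ(x) = (x + ρ)/(1 - ρ*x)` and `σ(∞) = -1/ρ`, is a bijection of `Ω` onto
`Δ = {y : y^(q+1) = -1}`, and its inverse `τ` satisfies `τ(y) = (y - ρ)/(1 + ρ*y)`
(as an element of `F_q`) whenever `1 + ρ*y ≠ 0`, and `τ(-1/ρ) = ∞`. -/
theorem sigma_bijOn_Delta
    (q : ℕ) (hq : IsPrimePow q) (hodd : Odd q)
    (F K : Type*) [Field F] [Fintype F] [Field K] [Fintype K]
    (hF : Fintype.card F = q) (hK : Fintype.card K = q ^ 2)
    (e : F →+* K) (ρ : K) (hρ1 : ρ ^ (q + 1) = -1) (hρ2 : ρ ∉ Set.range e) :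
    Set.BijOn (sigmaMap e ρ) Set.univ {y : K | y ^ (q + 1) = -1} ∧
    ∃ τ : K → OnePoint F,
      (∀ x : OnePoint F, τ (sigmaMap e ρ x) = x) ∧
      (∀ y : K, y ^ (q + 1) = -1 → sigmaMap e ρ (τ y) = y) ∧
      (∀ y : K, y ^ (q + 1) = -1 → 1 + ρ * y ≠ 0 →
        ∃ x : F, τ y = (x : OnePoint F) ∧ e x = (y - ρ) / (1 + ρ * y)) ∧
      τ (-1 / ρ) = ∞ := by
  classical
  obtain ⟨p, n, hp, hn, rfl⟩ := hq
  have hp' : p.Prime := hp.nat_prime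
  -- characteristic of K is p
  have hcharK : CharP K p := by
    obtain ⟨m, hmp, hcard⟩ := FiniteField.card K (ringChar K)
    rw [hK] at hcard
    have hdvd : p ∣ ringChar K ^ (m : ℕ) := by
      rw [← hcard]
      exact dvd_pow (dvd_pow_self p hn.ne') two_ne_zero
    have : p = ringChar K :=
      (Nat.prime_dvd_prime_iff_eq hp' hmp).mp (hp'.dvd_of_dvd_pow hdvd)
    rw [this]
    exact ringChar.charP K
  haveI := hcharK
  haveI : ExpChar K p := ExpChar.prime hp'
  -- range of e is the fixed field of the q-power Frobenius
  have hsubr : ∀ x : F, (e x) ^ p ^ n = e x := by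
    intro x
    rw [← map_pow, ← hF, FiniteField.pow_card]
  have hrange : ∀ y : K, y ∈ Set.range e ↔ y ^ p ^ n = y := by
    intro y
    constructor
    · rintro ⟨x, rfl⟩; exact hsubr x
    · intro hy
      by_contra hy'
      have hroots : ∀ z : K, z ^ p ^ n = z →
          z ∈ (Polynomial.X ^ p ^ n - Polynomial.X : Polynomial K).roots.toFinset := by
        intro z hz
        rw [Multiset.mem_toFinset, Polynomial.mem_roots
          (FiniteField.X_pow_card_pow_sub_X_ne_zero K hn.ne' hp'.one_lt)]
        simp [Polynomial.IsRoot, hz]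
      set S : Finset K := insert y (Finset.univ.image e) with hS
      have hSsub : S ⊆ (Polynomial.X ^ p ^ n - Polynomial.X : Polynomial K).roots.toFinset := by
        intro z hz
        rw [hS, Finset.mem_insert] at hz
        rcases hz with rfl | hz
        · exact hroots z hy
        · obtain ⟨x, _, rfl⟩ := Finset.mem_image.mp hz
          exact hroots _ (hsubr x)
      have hScard : S.card = p ^ n + 1 := by
        rw [hS, Finset.card_insert_of_notMem (by
          intro hmem
          obtain ⟨x, _, hxy⟩ := Finset.mem_image.mp hmem
          exact hy' ⟨x, hxy⟩), Finset.card_image_of_injective _ e.injective,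
          Finset.card_univ, hF]
      have hle : S.card ≤ p ^ n := by
        calc S.card ≤ _ := Finset.card_le_card hSsub
        _ ≤ _ := (Polynomial.X ^ p ^ n - Polynomial.X : Polynomial K).roots.toFinset_card_le
        _ ≤ _ := (Polynomial.card_roots' _).trans_eq
            (FiniteField.X_pow_card_pow_sub_X_natDegree_eq K hn.ne' hp'.one_lt)
      omega
  -- basic nonvanishing facts
  have hρ0 : ρ ≠ 0 := by
    intro h
    rw [h, zero_pow (Nat.succ_ne_zero _)] at hρ1
    exact one_ne_zero (neg_eq_zero.mp hρ1.symm)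
  have hρq' : ρ ^ p ^ n * ρ = -1 := by rw [← pow_succ]; exact hρ1
  have hsq : 1 + ρ ^ 2 ≠ 0 := by
    intro h
    apply hρ2
    rw [hrange]
    have h2 : ρ ^ p ^ n * ρ = ρ * ρ := by linear_combination hρq' - h
    exact mul_right_cancel₀ hρ0 h2
  have hden : ∀ x : F, 1 - ρ * e x ≠ 0 := by
    intro x h
    have hx0 : e x ≠ 0 := by
      intro h0; rw [h0, mul_zero, sub_zero] at h; exact one_ne_zero h
    apply hρ2
    refine ⟨x⁻¹, ?_⟩
    rw [map_inv₀]
    field_simp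
    linear_combination h
  have hnum : ∀ x : F, e x + ρ ≠ 0 := by
    intro x h
    exact hρ2 ⟨-x, by rw [map_neg]; linear_combination -h⟩
  -- membership : σ maps into Δ
  have hmem : ∀ x : OnePoint F, sigmaMap e ρ x ^ (p ^ n + 1) = -1 := by
    intro x
    induction x using OnePoint.rec with
    | infty =>
      show (-1 / ρ) ^ (p ^ n + 1) = -1
      have h1 : (-1 : K) / ρ = ρ ^ p ^ n := by
        rw [div_eq_iff hρ0]; exact hρq'.symm
      rw [h1, ← pow_mul, mul_comm, pow_mul, hρ1, Odd.neg_one_pow hodd]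
    | coe x =>
      show ((e x + ρ) / (1 - ρ * e x)) ^ (p ^ n + 1) = -1
      have ht : (e x) ^ p ^ n = e x := hsubr x
      have hd := hden x
      have hn2 := hnum x
      have hn2' : ρ + e x ≠ 0 := by rw [add_comm]; exact hn2
      have key : ((e x + ρ) / (1 - ρ * e x)) ^ p ^ n
          = (e x + ρ ^ p ^ n) / (1 - ρ ^ p ^ n * e x) := by
        have h1 := map_div₀ (iterateFrobenius K p n) (e x + ρ) (1 - ρ * e x)
        simp only [map_add, map_sub, map_one, map_mul, iterateFrobenius_def] at h1
        rw [h1, ht]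
      have hmul : (1 - ρ ^ p ^ n * e x) * ρ = ρ + e x := by
        linear_combination (-(e x)) * hρq'
      have hd2 : 1 - ρ ^ p ^ n * e x ≠ 0 := by
        intro h0
        apply hn2'
        rw [← hmul, h0, zero_mul]
      rw [pow_succ, key, div_mul_div_comm, div_eq_iff (mul_ne_zero hd2 hd)]
      linear_combination (1 + e x ^ 2) * hρq'
  -- Frobenius fixes (y - ρ)/(1 + ρ y) for y ∈ Δ
  have hfix : ∀ y : K, y ^ (p ^ n + 1) = -1 → 1 + ρ * y ≠ 0 →
      ((y - ρ) / (1 + ρ * y)) ^ p ^ n = (y - ρ) / (1 + ρ * y) := by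
    intro y hy hc
    have hy0 : y ≠ 0 := by
      intro h; rw [h, zero_pow (Nat.succ_ne_zero _)] at hy
      exact one_ne_zero (neg_eq_zero.mp hy.symm)
    have hyq' : y ^ p ^ n * y = -1 := by rw [← pow_succ]; exact hy
    have h1 := map_div₀ (iterateFrobenius K p n) (y - ρ) (1 + ρ * y)
    simp only [map_add, map_sub, map_one, map_mul, iterateFrobenius_def] at h1
    rw [h1]
    have hden2 : (1 + ρ ^ p ^ n * y ^ p ^ n) * (ρ * y) = 1 + ρ * y := by
      linear_combination (y ^ p ^ n * y) * hρq' - hyq'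
    have hd3 : 1 + ρ ^ p ^ n * y ^ p ^ n ≠ 0 := by
      intro h0
      apply hc
      rw [← hden2, h0, zero_mul]
    rw [div_eq_div_iff hd3 hc]
    linear_combination (y ^ p ^ n - y) * hρq' + (ρ - ρ ^ p ^ n) * hyq'
  -- the inverse map
  haveI : Nonempty F := ⟨0⟩
  set τ : K → OnePoint F := fun y =>
    if 1 + ρ * y = 0 then ∞
    else ((Function.invFun e ((y - ρ) / (1 + ρ * y)) : F) : OnePoint F) with hτdef
  have hτinf : τ (-1 / ρ) = ∞ := by
    rw [hτdef]
    simp only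
    rw [if_pos (by field_simp; norm_num)]
  -- left inverse
  have hleft : ∀ x : OnePoint F, τ (sigmaMap e ρ x) = x := by
    intro x
    induction x using OnePoint.rec with
    | infty => exact hτinf
    | coe x =>
      have hd := hden x
      have h1 : 1 + ρ * ((e x + ρ) / (1 - ρ * e x)) = (1 + ρ ^ 2) / (1 - ρ * e x) := by
        field_simp
        ring
      have h2 : (((e x + ρ) / (1 - ρ * e x)) - ρ) / (1 + ρ * ((e x + ρ) / (1 - ρ * e x)))
          = e x := by
        rw [h1, div_eq_iff (div_ne_zero hsq hd)]
        rw [mul_div_assoc', eq_div_iff hd, sub_mul, div_mul_cancel₀ _ hd]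
        ring
      show τ ((e x + ρ) / (1 - ρ * e x)) = (x : OnePoint F)
      rw [hτdef]
      simp only
      rw [if_neg (by rw [h1]; exact div_ne_zero hsq hd), h2,
        Function.leftInverse_invFun e.injective x]
  -- right inverse on Δ
  have hright : ∀ y : K, y ^ (p ^ n + 1) = -1 → sigmaMap e ρ (τ y) = y := by
    intro y hy
    by_cases hc : 1 + ρ * y = 0
    · have hy' : y = -1 / ρ := by
        field_simp
        linear_combination hc
      rw [hτdef]
      simp only
      rw [if_pos hc]
      show -1 / ρ = y
      exact hy'.symm
    · have htq := hfix y hy hc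
      have hte : (y - ρ) / (1 + ρ * y) ∈ Set.range e := (hrange _).mpr htq
      have het : e (Function.invFun e ((y - ρ) / (1 + ρ * y))) = (y - ρ) / (1 + ρ * y) :=
        Function.invFun_eq hte
      rw [hτdef]
      simp only
      rw [if_neg hc]
      show (e _ + ρ) / (1 - ρ * e _) = y
      rw [het]
      have hne : 1 - ρ * ((y - ρ) / (1 + ρ * y)) = (1 + ρ ^ 2) / (1 + ρ * y) := by
        field_simp
        ring
      rw [div_eq_iff (by rw [hne]; exact div_ne_zero hsq hc), hne]
      rw [mul_div_assoc', eq_div_iff hc, add_mul, div_mul_cancel₀ _ hc]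
      ring
  refine ⟨⟨fun x _ => hmem x, fun a _ b _ h => by rw [← hleft a, h, hleft b],
    fun y hy => ⟨τ y, Set.mem_univ _, hright y hy⟩⟩,
    τ, hleft, hright, ?_, hτinf⟩
  intro y hy hc
  refine ⟨Function.invFun e ((y - ρ) / (1 + ρ * y)), ?_,
    Function.invFun_eq ((hrange _).mpr (hfix y hy hc))⟩
  rw [hτdef]
  simp only
  rw [if_neg hc]
end

section
/- Let q be a prime power with q ≡ 1 (mod 6), let ρ ∈ F_{q²} satisfy ρ^{q+1} = −1 and ρ ∉ F_q, let Δ = {y ∈ F_{q²} : y^{q+1} = −1}, let σ : Ω → Δ be the bijection given by σ(x) = (x + ρ)/(1 − ρx) for x ∈ F_q and σ(∞) = −1/ρ, let τ = σ⁻¹, and let h : Δ → Δ be the bijection y ↦ y³. Then for every g ∈ PGL₂(q) acting on Ω = F_q ∪ {∞} by fractional linear transformations, the number of x ∈ Ω with τ(h(σ(x))) = g(x) is at most 4. -/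
open scoped OnePoint

open Polynomial in
lemma aux_mem_range_of_pow {F K : Type*} [Field F] [Fintype F] [Field K] [Fintype K]
    (q : ℕ) (hq2 : 2 ≤ q) (hF : Fintype.card F = q)
    (e : F →+* K) (ρ : K) (h : ρ ^ q = ρ) : ρ ∈ Set.range e := by
  classical
  set p : K[X] := X ^ q - X with hp
  have hpne : p ≠ 0 := by
    have h1 : ¬ 1 = q := by omega
    have hc : p.coeff q = 1 := by
      simp [hp, coeff_X_pow, coeff_X, h1]
    intro h0; rw [h0] at hc; simp at hc
  have hdeg : p.natDegree ≤ q := by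
    apply (natDegree_sub_le _ _).trans
    simp; omega
  have hsub : Finset.univ.image e ⊆ p.roots.toFinset := by
    intro y hy
    simp only [Finset.mem_image] at hy
    obtain ⟨t, -, rfl⟩ := hy
    rw [Multiset.mem_toFinset, mem_roots hpne]
    simp [hp, IsRoot, ← map_pow, ← hF, FiniteField.pow_card]
  have hcard : p.roots.toFinset.card ≤ (Finset.univ.image e).card := by
    rw [Finset.card_image_of_injective _ e.injective, Finset.card_univ, hF]
    exact (Multiset.toFinset_card_le _).trans ((Polynomial.card_roots' p).trans hdeg)
  have heq := Finset.eq_of_subset_of_card_le hsub hcard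
  have hρ : ρ ∈ p.roots.toFinset := by
    rw [Multiset.mem_toFinset, mem_roots hpne]
    simp [hp, IsRoot, h]
  rw [← heq] at hρ
  simp only [Finset.mem_image] at hρ
  obtain ⟨t, -, ht⟩ := hρ
  exact ⟨t, ht⟩

lemma aux_frob {K : Type*} [Field K] [Fintype K] (q : ℕ) (hq : IsPrimePow q)
    (hK : Fintype.card K = q ^ 2) (x y : K) : (x + y) ^ q = x ^ q + y ^ q := by
  obtain ⟨p, n, hp, hn, rfl⟩ := hq
  haveI := Fact.mk hp.nat_prime
  obtain ⟨n', hp', hcard⟩ := FiniteField.card K (ringChar K)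
  have hpp' : p = ringChar K := by
    have hdvd : p ∣ (ringChar K) ^ (n' : ℕ) := by
      rw [← hcard, hK, ← pow_mul]
      exact dvd_pow_self p (by positivity)
    exact (Nat.prime_dvd_prime_iff_eq hp.nat_prime hp').mp
      (hp.nat_prime.dvd_of_dvd_pow hdvd)
  haveI : CharP K p := hpp' ▸ ringChar.charP K
  exact add_pow_char_pow x y p n

lemma aux_conj {F K : Type*} [Field F] [Field K] (e : F →+* K) (ρ : K) (hρ0 : ρ ≠ 0)
    (hne : ∀ t : F, (1 : K) - ρ * e t ≠ 0) (a b c d : F) (x : OnePoint F) :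
    sigmaMap e ρ (moebius a b c d x) *
      ((e c + ρ * e d - ρ * e a - ρ ^ 2 * e b) * sigmaMap e ρ x
        + (e d - ρ * e b - ρ * e c + ρ ^ 2 * e a))
    = (e a + ρ * e b + ρ * e c + ρ ^ 2 * e d) * sigmaMap e ρ x
        + (e b - ρ * e a + ρ * e d - ρ ^ 2 * e c) := by
  classical
  have hsinf : sigmaMap e ρ ∞ = -1 / ρ := rfl
  have hscoe : ∀ u : F, sigmaMap e ρ (u : OnePoint F) = (e u + ρ) / (1 - ρ * e u) := fun _ => rfl
  cases x with
  | infty =>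
    by_cases hc : c = 0
    · subst hc
      have hm : moebius a b 0 d ∞ = ∞ := by
        show (if (0 : F) = 0 then ∞ else _) = ∞
        rw [if_pos rfl]
      rw [hm, hsinf, map_zero]
      field_simp
      ring
    · have hc' : e c ≠ 0 := fun h => hc (e.injective (by simpa using h))
      have hm : moebius a b c d ∞ = ((a / c : F) : OnePoint F) := by
        show (if c = 0 then ∞ else _) = _
        rw [if_neg hc]
      have hden := hne (a / c)
      rw [map_div₀] at hden
      have hden' : e c - ρ * e a ≠ 0 := by
        intro h
        apply hden
        rw [show (1 : K) - ρ * (e a / e c) = (e c - ρ * e a) / e c by field_simp, h, zero_div]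
      rw [hm, hscoe, hsinf, map_div₀]
      rw [show (1 : K) - ρ * (e a / e c) = (e c - ρ * e a) / e c by field_simp,
        div_div_eq_mul_div]
      rw [div_mul_eq_mul_div _ (e c - ρ * e a), div_eq_iff hden']
      field_simp
      ring
  | coe t =>
    have hdent := hne t
    rw [hscoe t]
    by_cases hct : c * t + d = 0
    · have hd : e d = -(e c * e t) := by
        have h := congrArg e hct
        rw [map_add, map_mul, map_zero] at h
        linear_combination h
      have hm : moebius a b c d (t : OnePoint F) = ∞ := by
        show (if c * t + d = 0 then ∞ else _) = ∞
        rw [if_pos hct]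
      rw [hm, hsinf, hd]
      field_simp
      ring
    · have hct' : e c * e t + e d ≠ 0 := by
        intro h
        apply hct
        apply e.injective
        rw [map_add, map_mul, map_zero]
        exact h
      have hm : moebius a b c d (t : OnePoint F) =
          (((a * t + b) / (c * t + d) : F) : OnePoint F) := by
        show (if c * t + d = 0 then ∞ else _) = _
        rw [if_neg hct]
      have hden := hne ((a * t + b) / (c * t + d))
      rw [map_div₀, map_add, map_add, map_mul, map_mul] at hden
      have hden' : (e c * e t + e d) - ρ * (e a * e t + e b) ≠ 0 := by
        intro h
        apply hden
        rw [show (1 : K) - ρ * ((e a * e t + e b) / (e c * e t + e d))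
          = ((e c * e t + e d) - ρ * (e a * e t + e b)) / (e c * e t + e d) by rw [sub_div, div_self hct', mul_div_assoc],
          h, zero_div]
      rw [hm, hscoe, map_div₀, map_add, map_add, map_mul, map_mul]
      rw [show (1 : K) - ρ * ((e a * e t + e b) / (e c * e t + e d))
        = ((e c * e t + e d) - ρ * (e a * e t + e b)) / (e c * e t + e d) by rw [sub_div, div_self hct', mul_div_assoc],
        div_div_eq_mul_div]
      rw [div_add' _ _ _ hct', div_mul_cancel₀ _ hct',
        div_mul_eq_mul_div _ ((e c * e t + e d) - ρ * (e a * e t + e b)), div_eq_iff hden']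
      have hn1 : 1 - e t * ρ ≠ 0 := fun h => hdent (by linear_combination h)
      field_simp
      ring

/-- Let `q ≡ 1 (mod 6)` be a prime power, `K = F_{q²}`, `F = F_q` embedded in `K` via `e`,
and let `ρ ∈ K` satisfy `ρ^(q+1) = -1` and `ρ ∉ F_q`. Let `σ : Ω = F_q ∪ {∞} → K` be the
bijection onto `Δ = {y : y^(q+1) = -1}` given by `σ(x) = (x + ρ)/(1 - ρ*x)`, `σ(∞) = -1/ρ`,
let `τ` be its inverse, and let `h : Δ → Δ` be the cube map `y ↦ y³`. Then for every
`g ∈ PGL₂(q)` acting on `Ω` by fractional linear transformations, the number of `x ∈ Ω`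
with `τ(h(σ(x))) = g(x)` is at most `4`. -/
theorem card_agree_tau_cube_sigma_le_four
    (q : ℕ) (hq : IsPrimePow q) (hmod : q % 6 = 1)
    (F K : Type*) [Field F] [Fintype F] [Field K] [Fintype K]
    (hF : Fintype.card F = q) (hK : Fintype.card K = q ^ 2)
    (e : F →+* K) (ρ : K) (hρ1 : ρ ^ (q + 1) = -1) (hρ2 : ρ ∉ Set.range e)
    (τ : K → OnePoint F)
    (hτ1 : ∀ x : OnePoint F, τ (sigmaMap e ρ x) = x)
    (hτ2 : ∀ y : K, y ^ (q + 1) = -1 → sigmaMap e ρ (τ y) = y) :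
    ∀ g ∈ PGLset F,
      {x : OnePoint F | τ ((sigmaMap e ρ x) ^ 3) = g x}.ncard ≤ 4 := by
  classical
  intro g hg
  obtain ⟨a, b, c, d, hdet, hgx⟩ := hg
  have hq2 : 2 ≤ q := hq.two_le
  have hρ0 : ρ ≠ 0 := by
    intro h
    rw [h, zero_pow (by omega : q + 1 ≠ 0)] at hρ1
    exact one_ne_zero (α := K) (by linear_combination hρ1)
  have hne : ∀ t : F, (1 : K) - ρ * e t ≠ 0 := by
    intro t h
    apply hρ2
    have ht0 : e t ≠ 0 := by
      intro h0; rw [h0, mul_zero] at h; simp at h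
    refine ⟨t⁻¹, ?_⟩
    rw [map_inv₀]
    exact inv_eq_of_mul_eq_one_right (by linear_combination -h)
  have hqodd : q % 2 = 1 := by omega
  have hrhoq : ρ ^ q * ρ = -1 := by rw [← pow_succ]; exact hρ1
  have hone_add : (1 : K) + ρ ^ 2 ≠ 0 := by
    intro h
    have h2 : ρ ^ 2 = -1 := by linear_combination h
    have e1 : ρ ^ (q + 1) = ρ ^ (q - 1) * ρ ^ 2 := by
      rw [← pow_add]; congr 1; omega
    have e2 : ρ ^ (q - 1) = 1 := by
      have h3 := hρ1
      rw [e1, h2] at h3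
      linear_combination -h3
    have e3 : ρ ^ q = ρ := by
      have h4 : ρ ^ q = ρ ^ (q - 1) * ρ := by rw [← pow_succ]; congr 1; omega
      rw [h4, e2, one_mul]
    exact hρ2 (aux_mem_range_of_pow q hq2 hF e ρ e3)
  have hdelta : ∀ x : OnePoint F, (sigmaMap e ρ x) ^ (q + 1) = -1 := by
    intro x
    cases x with
    | infty =>
      show ((-1 : K) / ρ) ^ (q + 1) = -1
      rw [div_pow, hρ1]
      rw [Even.neg_one_pow (Nat.even_iff.mpr (by omega))]
      field_simp
    | coe t =>
      show ((e t + ρ) / (1 - ρ * e t)) ^ (q + 1) = -1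
      have hden := hne t
      have hfrob_num : (e t + ρ) ^ q = e t + ρ ^ q := by
        rw [aux_frob q hq hK, ← map_pow, ← hF, FiniteField.pow_card]
      have hfrob_den : (1 - ρ * e t) ^ q = 1 - ρ ^ q * e t := by
        have h1 : (1 : K) - ρ * e t = 1 + (-(ρ * e t)) := by ring
        rw [h1, aux_frob q hq hK, one_pow, Odd.neg_pow (Nat.odd_iff.mpr hqodd), mul_pow,
          ← map_pow, ← hF, FiniteField.pow_card]
        ring
      have hs : ρ ^ q * ρ = -1 := hrhoq
      have hden2 : 1 - ρ ^ q * e t ≠ 0 := by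
        intro h1
        apply hρ2
        refine ⟨-t, ?_⟩
        rw [map_neg]
        have hρet : ρ = -e t := by linear_combination ρ * h1 + e t * hs
        linear_combination -hρet
      rw [pow_succ, div_pow, hfrob_num, hfrob_den, div_mul_div_comm,
        div_eq_iff (mul_ne_zero hden2 hden)]
      linear_combination (1 + e t ^ 2) * hs
  have hσinj : Function.Injective (sigmaMap e ρ) := Function.LeftInverse.injective hτ1
  have hdetK : (e a + ρ * e b + ρ * e c + ρ ^ 2 * e d)
      * (e d - ρ * e b - ρ * e c + ρ ^ 2 * e a)
      - (e b - ρ * e a + ρ * e d - ρ ^ 2 * e c)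
      * (e c + ρ * e d - ρ * e a - ρ ^ 2 * e b)
      = (1 + ρ ^ 2) ^ 2 * (e a * e d - e b * e c) := by ring
  have hdet' : (e a + ρ * e b + ρ * e c + ρ ^ 2 * e d)
      * (e d - ρ * e b - ρ * e c + ρ ^ 2 * e a)
      - (e b - ρ * e a + ρ * e d - ρ ^ 2 * e c)
      * (e c + ρ * e d - ρ * e a - ρ ^ 2 * e b) ≠ 0 := by
    rw [hdetK]
    apply mul_ne_zero (pow_ne_zero _ hone_add)
    intro h
    apply hdet
    apply e.injective
    rw [map_sub, map_mul, map_mul, map_zero]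
    exact h
  set p : Polynomial K :=
    Polynomial.C (e c + ρ * e d - ρ * e a - ρ ^ 2 * e b) * Polynomial.X ^ 4
    + Polynomial.C (e d - ρ * e b - ρ * e c + ρ ^ 2 * e a) * Polynomial.X ^ 3
    - Polynomial.C (e a + ρ * e b + ρ * e c + ρ ^ 2 * e d) * Polynomial.X
    - Polynomial.C (e b - ρ * e a + ρ * e d - ρ ^ 2 * e c) with hp
  have hcoeff4 : p.coeff 4 = e c + ρ * e d - ρ * e a - ρ ^ 2 * e b := by
    simp only [hp, Polynomial.coeff_add, Polynomial.coeff_sub, Polynomial.coeff_C_mul,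
      Polynomial.coeff_X_pow, Polynomial.coeff_X, Polynomial.coeff_C]
    norm_num
  have hcoeff3 : p.coeff 3 = e d - ρ * e b - ρ * e c + ρ ^ 2 * e a := by
    simp only [hp, Polynomial.coeff_add, Polynomial.coeff_sub, Polynomial.coeff_C_mul,
      Polynomial.coeff_X_pow, Polynomial.coeff_X, Polynomial.coeff_C]
    norm_num
  have hcoeff1 : p.coeff 1 = -(e a + ρ * e b + ρ * e c + ρ ^ 2 * e d) := by
    simp only [hp, Polynomial.coeff_add, Polynomial.coeff_sub, Polynomial.coeff_C_mul,
      Polynomial.coeff_X_pow, Polynomial.coeff_X, Polynomial.coeff_C]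
    norm_num
  have hcoeff0 : p.coeff 0 = -(e b - ρ * e a + ρ * e d - ρ ^ 2 * e c) := by
    simp only [hp, Polynomial.coeff_add, Polynomial.coeff_sub, Polynomial.coeff_C_mul,
      Polynomial.coeff_X_pow, Polynomial.coeff_X, Polynomial.coeff_C]
    norm_num
  have hpne : p ≠ 0 := by
    intro h0
    apply hdet'
    have h4 : e c + ρ * e d - ρ * e a - ρ ^ 2 * e b = 0 := by
      rw [← hcoeff4, h0, Polynomial.coeff_zero]
    have h3 : e d - ρ * e b - ρ * e c + ρ ^ 2 * e a = 0 := by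
      rw [← hcoeff3, h0, Polynomial.coeff_zero]
    have h1 : e a + ρ * e b + ρ * e c + ρ ^ 2 * e d = 0 := by
      have := hcoeff1
      rw [h0, Polynomial.coeff_zero] at this
      linear_combination this
    have hh0 : e b - ρ * e a + ρ * e d - ρ ^ 2 * e c = 0 := by
      have := hcoeff0
      rw [h0, Polynomial.coeff_zero] at this
      linear_combination this
    rw [h4, h3, h1, hh0]
    ring
  have hdeg : p.natDegree ≤ 4 := by
    rw [hp]
    compute_degree!
  have key : ∀ x ∈ {x : OnePoint F | τ ((sigmaMap e ρ x) ^ 3) = g x},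
      p.IsRoot (sigmaMap e ρ x) := by
    intro x hx
    have hx' : τ ((sigmaMap e ρ x) ^ 3) = g x := hx
    have hd3 : ((sigmaMap e ρ x) ^ 3) ^ (q + 1) = -1 := by
      rw [← pow_mul, mul_comm 3 (q + 1), pow_mul, hdelta x]
      ring
    have h1 : sigmaMap e ρ (g x) = (sigmaMap e ρ x) ^ 3 := by
      rw [← hx']
      exact hτ2 _ hd3
    have h2 := aux_conj e ρ hρ0 hne a b c d x
    rw [← hgx x, h1] at h2
    show p.eval (sigmaMap e ρ x) = 0
    rw [hp]
    simp only [Polynomial.eval_add, Polynomial.eval_sub, Polynomial.eval_mul,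
      Polynomial.eval_pow, Polynomial.eval_C, Polynomial.eval_X]
    linear_combination h2
  calc {x : OnePoint F | τ ((sigmaMap e ρ x) ^ 3) = g x}.ncard
      = (sigmaMap e ρ '' {x : OnePoint F | τ ((sigmaMap e ρ x) ^ 3) = g x}).ncard :=
        (Set.ncard_image_of_injective _ hσinj).symm
    _ ≤ (↑p.roots.toFinset : Set K).ncard := by
        apply Set.ncard_le_ncard _ (Finset.finite_toSet _)
        rintro y ⟨x, hx, rfl⟩
        rw [Finset.mem_coe, Multiset.mem_toFinset, Polynomial.mem_roots hpne]
        exact key x hx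
    _ = p.roots.toFinset.card := Set.ncard_coe_finset _
    _ ≤ Multiset.card p.roots := Multiset.toFinset_card_le _
    _ ≤ p.natDegree := Polynomial.card_roots' p
    _ ≤ 4 := hdeg
end
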